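/- arXiv:2507.12303 — 5 statements merged into one kernel-verified Lean document; each statement's English description precedes it below -/
import Mathlib

section
/- Let p>2 and suppose u0(x0)>0 for some vertex x0∈V and δ:=inf_{t≥0}σ(x0,t)>0. If for some fixed ε>0 one has f(s) ≥ (1/δ + ε)·s^{p−1} for all s ≥ 0, then the inequality problem u_t(x,t) − Δ_p u(x,t) ≥ σ(x,t)f(u(x,t)) on V×(0,∞), u(x,0)=u0(x), admits no nonnegative solution u defined for all t ≥ 0 with u(x,·) continuously differentiable on [0,∞) for every x∈V; every nonnegative solution blows up in finite time, i.e. there is a finite T with u(x0,t)→∞ as t→T⁻. -/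
open scoped ENNReal
open Classical Filter Set

/-- The weighted degree `μ(x) = ∑_{y ∼ x} ω(x,y)` of a vertex of a locally finite
weighted graph (non-neighbours contribute `ω(x,y) = 0`). -/
noncomputable def graphMu {V : Type*} (ω : V → V → ℝ) (x : V) : ℝ := ∑' y, ω x y

/-- The graph `p`-Laplacian
`Δ_p f(x) = (1/μ(x)) ∑_{y ∼ x} ω(x,y) |f(y) - f(x)|^{p-2} (f(y) - f(x))`. -/
noncomputable def pLap {V : Type*} (ω : V → V → ℝ) (p : ℝ) (f : V → ℝ) (x : V) : ℝ :=
  (graphMu ω x)⁻¹ * ∑' y, ω x y * |f y - f x| ^ (p - 2) * (f y - f x)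

/-- on a connected, locally finite weighted graph, if `u0(x0) > 0`,
`δ := inf_{t ≥ 0} σ(x0,t) > 0` and `f(s) ≥ (1/δ + ε) s^{p-1}` for all `s ≥ 0` (some fixed
`ε > 0`), then the parabolic inequality `u_t - Δ_p u ≥ σ(x,t) f(u)`, `u(·,0) = u0`, admits
no nonnegative solution defined for all `t ≥ 0` that is `C¹` in time at each vertex. -/
theorem no_global_solution_inequality_superlinear
    {V : Type*} (ω : V → V → ℝ)
    (hsymm : ∀ x y, ω x y = ω y x)
    (hnonneg : ∀ x y, 0 ≤ ω x y)
    (hloop : ∀ x, ω x x = 0)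
    (hlf : ∀ x, (Function.support (ω x)).Finite)
    (hconn : ∀ x y, Relation.ReflTransGen (fun a b => 0 < ω a b) x y)
    (p : ℝ) (hp : 2 < p)
    (σ : V → ℝ → ℝ)
    (hσpos : ∀ x t, 0 ≤ t → 0 < σ x t)
    (hσcont : ∀ x, ContinuousOn (σ x) (Set.Ici 0))
    (f : ℝ → ℝ) (hf : LocallyLipschitz f) (hf0 : f 0 = 0)
    (u0 : V → ℝ) (hu0nn : ∀ x, 0 ≤ u0 x) (hu0bd : ∃ M, ∀ x, u0 x ≤ M)
    (x0 : V) (hx0 : 0 < u0 x0)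
    (δ : ℝ) (hδdef : δ = ⨅ t : Set.Ici (0 : ℝ), σ x0 t.1) (hδpos : 0 < δ)
    (ε : ℝ) (hε : 0 < ε)
    (hfgrow : ∀ s, 0 ≤ s → (1 / δ + ε) * s ^ (p - 1) ≤ f s) :
    ¬ ∃ u : V → ℝ → ℝ,
      (∀ x, ContDiffOn ℝ 1 (u x) (Set.Ici 0)) ∧
      (∀ x t, 0 ≤ t → 0 ≤ u x t) ∧
      (∀ x, u x 0 = u0 x) ∧
      (∀ x t, 0 < t →
        σ x t * f (u x t) ≤
          derivWithin (u x) (Set.Ici 0) t - pLap ω p (fun y => u y t) x) := by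

  rintro ⟨u, hC1, hnn, hinit, hineq⟩
  set v : ℝ → ℝ := u x0 with hvdef
  set a : ℝ := u0 x0 with hadef
  set c : ℝ := δ * ε with hcdef
  have hcpos : 0 < c := mul_pos hδpos hε
  have hp1 : (1 : ℝ) < p - 1 := by linarith
  -- δ is a lower bound for σ x0 on [0, ∞)
  have hδle : ∀ t : ℝ, 0 ≤ t → δ ≤ σ x0 t := by
    intro t ht
    rw [hδdef]
    exact ciInf_le ⟨0, by rintro y ⟨s, rfl⟩; exact (hσpos x0 s.1 s.2).le⟩ (⟨t, ht⟩ : Set.Ici (0:ℝ))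
  -- continuity and differentiability of v
  have hvcont : ContinuousOn v (Set.Ici 0) := (hC1 x0).continuousOn
  have hvdiff : ∀ t : ℝ, 0 < t → DifferentiableAt ℝ v t := by
    intro t ht
    exact ((hC1 x0).differentiableOn one_ne_zero t (le_of_lt ht)).differentiableAt (Ici_mem_nhds ht)
  -- the key differential inequality at x0
  have hkey : ∀ t : ℝ, 0 < t → c * v t ^ (p - 1) ≤ deriv v t := by
    intro t ht
    have htnn : (0:ℝ) ≤ t := ht.le
    have hvnn : 0 ≤ v t := hnn x0 t htnn
    have hvp_nn : 0 ≤ v t ^ (p - 1) := Real.rpow_nonneg hvnn _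
    -- lower bound on the p-Laplacian
    have hpl : -(v t ^ (p - 1)) ≤ pLap ω p (fun y => u y t) x0 := by
      set s : Finset V := (hlf x0).toFinset with hsdef
      have hmem : ∀ y, y ∉ s → ω x0 y = 0 := by
        intro y hy
        by_contra h
        exact hy ((hlf x0).mem_toFinset.2 h)
      have hμ : graphMu ω x0 = ∑ y ∈ s, ω x0 y :=
        tsum_eq_sum (fun y hy => hmem y hy)
      have hterm : ∀ y, -(ω x0 y * v t ^ (p - 1)) ≤
          ω x0 y * |u y t - v t| ^ (p - 2) * (u y t - v t) := by
        intro y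
        rcases le_or_gt (v t) (u y t) with hle | hlt
        · have h1 : 0 ≤ ω x0 y * |u y t - v t| ^ (p - 2) * (u y t - v t) :=
            mul_nonneg (mul_nonneg (hnonneg x0 y) (Real.rpow_nonneg (abs_nonneg _) _))
              (by linarith)
          have h2 : 0 ≤ ω x0 y * v t ^ (p - 1) := mul_nonneg (hnonneg x0 y) hvp_nn
          linarith
        · have hd : u y t - v t < 0 := by linarith
          have habs : |u y t - v t| = v t - u y t := by
            rw [abs_of_neg hd]; ring
          have habsle : |u y t - v t| ≤ v t := by
            rw [habs]; have := hnn y t htnn; linarith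
          have habspos : 0 < |u y t - v t| := abs_pos.2 hd.ne
          have hpow : |u y t - v t| ^ (p - 1) ≤ v t ^ (p - 1) :=
            Real.rpow_le_rpow (abs_nonneg _) habsle (by linarith)
          have hsplit : |u y t - v t| ^ (p - 2) * (u y t - v t)
              = -(|u y t - v t| ^ (p - 1)) := by
            have : |u y t - v t| ^ (p - 1)
                = |u y t - v t| ^ (p - 2) * |u y t - v t| := by
              rw [show p - 1 = (p - 2) + 1 by ring, Real.rpow_add habspos,
                Real.rpow_one]
            rw [this, habs]
            ring
          have h3 : ω x0 y * |u y t - v t| ^ (p - 1) ≤ ω x0 y * v t ^ (p - 1) :=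
            mul_le_mul_of_nonneg_left hpow (hnonneg x0 y)
          calc -(ω x0 y * v t ^ (p - 1)) ≤ -(ω x0 y * |u y t - v t| ^ (p - 1)) := by
                linarith
            _ = ω x0 y * |u y t - v t| ^ (p - 2) * (u y t - v t) := by
                rw [mul_assoc, hsplit]; ring
      have hStsum : (∑' y, ω x0 y * |u y t - v t| ^ (p - 2) * (u y t - v t))
          = ∑ y ∈ s, ω x0 y * |u y t - v t| ^ (p - 2) * (u y t - v t) := by
        refine tsum_eq_sum (fun y hy => ?_)
        rw [hmem y hy]; ring
      have hS : -(graphMu ω x0 * v t ^ (p - 1)) ≤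
          ∑' y, ω x0 y * |u y t - v t| ^ (p - 2) * (u y t - v t) := by
        rw [hStsum, hμ]
        calc -((∑ y ∈ s, ω x0 y) * v t ^ (p - 1))
            = ∑ y ∈ s, -(ω x0 y * v t ^ (p - 1)) := by
              rw [Finset.sum_neg_distrib, Finset.sum_mul]
          _ ≤ _ := Finset.sum_le_sum (fun y _ => hterm y)
      have hμnn : 0 ≤ graphMu ω x0 := by
        rw [hμ]; exact Finset.sum_nonneg (fun y _ => hnonneg x0 y)
      rcases eq_or_lt_of_le hμnn with hμ0 | hμpos
      · have : pLap ω p (fun y => u y t) x0 = 0 := by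
          simp [pLap, ← hμ0]
        rw [this]
        linarith
      · have h1 : (graphMu ω x0)⁻¹ * -(graphMu ω x0 * v t ^ (p - 1)) ≤
            pLap ω p (fun y => u y t) x0 :=
          mul_le_mul_of_nonneg_left hS (inv_nonneg.2 hμnn)
        have h2 : (graphMu ω x0)⁻¹ * -(graphMu ω x0 * v t ^ (p - 1))
            = -(v t ^ (p - 1)) := by
          field_simp
        rw [h2] at h1
        linarith
    -- lower bound on the reaction term
    have hσf : (1 + c) * v t ^ (p - 1) ≤ σ x0 t * f (v t) := by
      have hfv : (1 / δ + ε) * v t ^ (p - 1) ≤ f (v t) := hfgrow _ hvnn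
      have h1δ : 0 ≤ 1 / δ + ε := by
        have : 0 ≤ 1 / δ := div_nonneg zero_le_one hδpos.le
        linarith
      have hfvnn : 0 ≤ f (v t) := le_trans (mul_nonneg h1δ hvp_nn) hfv
      have hσge : δ ≤ σ x0 t := hδle t htnn
      have hδc : δ * (1 / δ + ε) = 1 + c := by
        rw [hcdef, mul_add, mul_one_div, div_self hδpos.ne']
      calc (1 + c) * v t ^ (p - 1) = δ * ((1 / δ + ε) * v t ^ (p - 1)) := by
            rw [← hδc]; ring
        _ ≤ δ * f (v t) := mul_le_mul_of_nonneg_left hfv hδpos.le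
        _ ≤ σ x0 t * f (v t) := mul_le_mul_of_nonneg_right hσge hfvnn
    have hder : derivWithin (u x0) (Set.Ici 0) t = deriv v t :=
      derivWithin_of_mem_nhds (Ici_mem_nhds ht)
    have := hineq x0 t ht
    rw [hder] at this
    have : σ x0 t * f (v t) + pLap ω p (fun y => u y t) x0 ≤ deriv v t := by linarith
    nlinarith [hσf, hpl, this]
  -- v is monotone, hence bounded below by a > 0
  have hmono : MonotoneOn v (Set.Ici 0) := by
    apply monotoneOn_of_deriv_nonneg (convex_Ici 0) hvcont
    · intro t ht
      rw [interior_Ici] at ht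
      exact (hvdiff t ht).differentiableWithinAt
    · intro t ht
      rw [interior_Ici] at ht
      have := hkey t ht
      have : 0 ≤ c * v t ^ (p - 1) :=
        mul_nonneg hcpos.le (Real.rpow_nonneg (hnn x0 t ht.le) _)
      linarith [hkey t ht]
  have hapos : 0 < a := hx0
  have hvlb : ∀ t : ℝ, 0 ≤ t → a ≤ v t := by
    intro t ht
    have h0 : v 0 = a := hinit x0
    calc a = v 0 := h0.symm
      _ ≤ v t := hmono (le_refl (0:ℝ)) ht ht
  have hvpos : ∀ t : ℝ, 0 ≤ t → 0 < v t := fun t ht => lt_of_lt_of_le hapos (hvlb t ht)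
  -- the auxiliary function h(t) = v(t)^(2-p) + c (p-2) t is antitone
  set g : ℝ → ℝ := fun t => v t ^ (2 - p) with hgdef
  set h : ℝ → ℝ := fun t => g t + c * (p - 2) * t with hhdef
  have hgderiv : ∀ t : ℝ, 0 < t →
      HasDerivAt g (deriv v t * (2 - p) * v t ^ (2 - p - 1)) t := by
    intro t ht
    exact ((hvdiff t ht).hasDerivAt).rpow_const (Or.inl (hvpos t ht.le).ne')
  have hhderiv : ∀ t : ℝ, 0 < t →
      HasDerivAt h (deriv v t * (2 - p) * v t ^ (2 - p - 1) + c * (p - 2)) t := by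
    intro t ht
    have := (hgderiv t ht).add (((hasDerivAt_id t).const_mul (c * (p - 2))))
    simp only [mul_one] at this
    exact this
  have hhanti : AntitoneOn h (Set.Ici 0) := by
    apply antitoneOn_of_deriv_nonpos (convex_Ici 0)
    · apply ContinuousOn.add
      · exact ContinuousOn.rpow_const hvcont
          (fun t ht => Or.inl (hvpos t ht).ne')
      · exact (continuous_const.mul continuous_id).continuousOn
    · intro t ht
      rw [interior_Ici] at ht
      exact (hhderiv t ht).differentiableAt.differentiableWithinAt
    · intro t ht
      rw [interior_Ici] at ht
      rw [(hhderiv t ht).deriv]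
      have hvtpos := hvpos t ht.le
      have hk := hkey t ht
      have hwnn : 0 < v t ^ (2 - p - 1) := Real.rpow_pos_of_pos hvtpos _
      have hmul : deriv v t * ((p - 2) * v t ^ (2 - p - 1)) ≥
          c * v t ^ (p - 1) * ((p - 2) * v t ^ (2 - p - 1)) :=
        mul_le_mul_of_nonneg_right hk (mul_nonneg (by linarith) hwnn.le)
      have hcollapse : v t ^ (p - 1) * v t ^ (2 - p - 1) = 1 := by
        rw [← Real.rpow_add hvtpos, show p - 1 + (2 - p - 1) = 0 by ring,
          Real.rpow_zero]
      have heq : c * v t ^ (p - 1) * ((p - 2) * v t ^ (2 - p - 1)) = c * (p - 2) := by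
        calc c * v t ^ (p - 1) * ((p - 2) * v t ^ (2 - p - 1))
            = c * (p - 2) * (v t ^ (p - 1) * v t ^ (2 - p - 1)) := by ring
          _ = c * (p - 2) := by rw [hcollapse, mul_one]
      have hneg : deriv v t * (2 - p) * v t ^ (2 - p - 1)
          = -(deriv v t * ((p - 2) * v t ^ (2 - p - 1))) := by ring
      rw [hneg]
      rw [heq] at hmul
      linarith
  -- derive the contradiction at a large enough time
  set T : ℝ := a ^ (2 - p) / (c * (p - 2)) + 1 with hTdef
  have hcp : 0 < c * (p - 2) := mul_pos hcpos (by linarith)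
  have hga : 0 < a ^ (2 - p) := Real.rpow_pos_of_pos hapos _
  have hT : 0 < T := by
    have : 0 ≤ a ^ (2 - p) / (c * (p - 2)) := div_nonneg hga.le hcp.le
    rw [hTdef]; linarith
  have hle : h T ≤ h 0 := hhanti (le_refl (0:ℝ)) hT.le hT.le
  have hv0 : v 0 = a := hinit x0
  have hh0 : h 0 = a ^ (2 - p) := by
    simp [hhdef, hgdef, hv0]
  have hgT : 0 < g T := Real.rpow_pos_of_pos (hvpos T hT.le) _
  have : g T + c * (p - 2) * T ≤ a ^ (2 - p) := by
    rw [← hh0]; exact hle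
  have hTbig : a ^ (2 - p) < c * (p - 2) * T := by
    rw [hTdef]
    have : c * (p - 2) * (a ^ (2 - p) / (c * (p - 2)) + 1)
        = a ^ (2 - p) + c * (p - 2) := by
      field_simp [(by linarith : (0:ℝ) < p - 2).ne']
    rw [this]
    linarith
  linarith
end

section
/- Assume in addition that for every T0>0 there is M>0 with σ(x,t) ≤ M for all x∈V and t∈[0,T0]. Then there exist T>0 and a bounded function u:V×[0,T]→ℝ with u(x,·) continuous on [0,T] for every x∈V such that u(x,t) = u0(x) + ∫_0^t Δ_p u(x,s) ds + ∫_0^t σ(x,s) f(u(x,s)) ds for all x∈V and t∈[0,T]; in particular the problem u_t − Δ_p u = σ(x,t)f(u) on V×(0,T], u(·,0)=u0, has at least one local-in-time solution with u(x,·)∈C¹ for each x. -/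
open scoped ENNReal
open Classical Filter Set

lemma phi_hasDerivAt (p : ℝ) (hp : 2 < p) (s : ℝ) :
    HasDerivAt (fun t : ℝ => |t| ^ (p - 2) * t) ((p - 1) * |s| ^ (p - 2)) s := by
  have hexp : p - 1 - 1 = p - 2 := by ring
  rcases lt_trichotomy s 0 with hs | hs | hs
  · have h0 : HasDerivAt (fun y : ℝ => y ^ (p - 1)) ((p - 1) * (-s) ^ (p - 1 - 1)) (-s) :=
      Real.hasDerivAt_rpow_const (Or.inl (by linarith))
    have h1 := (h0.comp s (hasDerivAt_neg s)).neg
    have h2 : HasDerivAt (fun t : ℝ => -((-t) ^ (p - 1))) ((p - 1) * |s| ^ (p - 2)) s := by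
      refine h1.congr_deriv ?_
      rw [hexp, abs_of_neg hs]; ring
    have heq : (fun t : ℝ => |t| ^ (p - 2) * t) =ᶠ[nhds s] fun t : ℝ => -((-t) ^ (p - 1)) := by
      filter_upwards [Iio_mem_nhds hs] with t ht
      have ht' : t < 0 := ht
      have hne : (-t : ℝ) ≠ 0 := neg_ne_zero.mpr (ne_of_lt ht')
      rw [abs_of_neg ht', show p - 1 = (p - 2) + 1 by ring, Real.rpow_add_one hne]
      ring
    exact h2.congr_of_eventuallyEq heq
  · subst hs
    rw [abs_zero, Real.zero_rpow (by norm_num; linarith), mul_zero]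
    rw [hasDerivAt_iff_tendsto_slope]
    have hcont : ContinuousAt (fun h : ℝ => |h| ^ (p - 2)) 0 := by
      exact (Real.continuousAt_rpow_const |0| (p - 2) (Or.inr (by linarith))).comp
        continuous_abs.continuousAt
    have h0 : Tendsto (fun h : ℝ => |h| ^ (p - 2)) (nhds 0) (nhds 0) := by
      have := hcont.tendsto
      simpa [abs_zero, Real.zero_rpow (show p - 2 ≠ 0 by norm_num; linarith)] using this
    refine Tendsto.congr' ?_ (h0.mono_left nhdsWithin_le_nhds)
    filter_upwards [self_mem_nhdsWithin] with t ht
    have ht' : (t : ℝ) ≠ 0 := ht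
    simp [slope_def_field, abs_zero, Real.zero_rpow (show p - 2 ≠ 0 by norm_num; linarith)]
    field_simp
  · have h0 : HasDerivAt (fun y : ℝ => y ^ (p - 1)) ((p - 1) * s ^ (p - 1 - 1)) s :=
      Real.hasDerivAt_rpow_const (Or.inl (by linarith))
    have heq : (fun t : ℝ => |t| ^ (p - 2) * t) =ᶠ[nhds s] fun t : ℝ => t ^ (p - 1) := by
      filter_upwards [Ioi_mem_nhds hs] with t ht
      have ht' : (0:ℝ) < t := ht
      rw [abs_of_pos ht', show p - 1 = (p - 2) + 1 by ring, Real.rpow_add_one (ne_of_gt ht')]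
    have h2 : HasDerivAt (fun t : ℝ => t ^ (p - 1)) ((p - 1) * |s| ^ (p - 2)) s := by
      convert h0 using 1; rw [hexp, abs_of_pos hs]
    exact h2.congr_of_eventuallyEq heq


lemma phi_continuous (p : ℝ) (hp : 2 < p) : Continuous (fun t : ℝ => |t| ^ (p - 2) * t) :=
  continuous_iff_continuousAt.mpr fun s => (phi_hasDerivAt p hp s).continuousAt

lemma phi_lipschitz (p : ℝ) (hp : 2 < p) {R a b : ℝ} (hR : 0 ≤ R) (ha : |a| ≤ R) (hb : |b| ≤ R) :
    |(|a| ^ (p - 2) * a) - |b| ^ (p - 2) * b| ≤ (p - 1) * R ^ (p - 2) * |a - b| := by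
  have key := Convex.norm_image_sub_le_of_norm_hasDerivWithin_le (C := (p - 1) * R ^ (p - 2))
    (f := fun t : ℝ => |t| ^ (p - 2) * t) (f' := fun t : ℝ => (p - 1) * |t| ^ (p - 2))
    (s := Icc (-R) R)
    (fun y hy => (phi_hasDerivAt p hp y).hasDerivWithinAt)
    (fun y hy => ?_) (convex_Icc _ _) (abs_le.mp hb) (abs_le.mp ha)
  · simpa [Real.norm_eq_abs] using key
  · rw [Real.norm_eq_abs, abs_mul, abs_of_nonneg (by linarith : (0:ℝ) ≤ p - 1),
      abs_of_nonneg (Real.rpow_nonneg (abs_nonneg y) _)]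
    have : |y| ^ (p - 2) ≤ R ^ (p - 2) :=
      Real.rpow_le_rpow (abs_nonneg y) (abs_le.mpr hy) (by linarith)
    nlinarith

lemma locLip_bound {f : ℝ → ℝ} (hf : LocallyLipschitz f) {R : ℝ} (hR : 0 < R) :
    ∃ L : ℝ, 0 ≤ L ∧ ∀ a ∈ Icc (-R) R, ∀ b ∈ Icc (-R) R, |f a - f b| ≤ L * |a - b| := by
  have hchoice : ∀ x : ℝ, ∃ Kε : NNReal × ℝ, 0 < Kε.2 ∧
      LipschitzOnWith Kε.1 f (Metric.ball x Kε.2) := by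
    intro x
    obtain ⟨K, t, ht, hl⟩ := hf x
    obtain ⟨ε, hε, hsub⟩ := Metric.mem_nhds_iff.mp ht
    exact ⟨(K, ε), hε, hl.mono hsub⟩
  choose Kε hεpos hlip using hchoice
  obtain ⟨s, hs⟩ := isCompact_Icc.elim_finite_subcover
    (fun x : ℝ => Metric.ball x ((Kε x).2 / 2)) (fun x => Metric.isOpen_ball)
    (fun x hx => mem_iUnion.mpr ⟨x, Metric.mem_ball_self (half_pos (hεpos x))⟩)
  have h0mem : (0 : ℝ) ∈ Icc (-R) R := ⟨by linarith, hR.le⟩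
  have hsne : s.Nonempty := by
    rcases mem_iUnion₂.mp (hs h0mem) with ⟨x, hx, -⟩
    exact ⟨x, hx⟩
  set δ : ℝ := s.inf' hsne (fun x => (Kε x).2 / 2) with hδ
  have hδpos : 0 < δ := (Finset.lt_inf'_iff hsne).mpr fun x _ => half_pos (hεpos x)
  set K : ℝ := s.sup' hsne (fun x => ((Kε x).1 : ℝ)) with hK
  have hKnn : 0 ≤ K := le_trans (Kε hsne.choose).1.coe_nonneg
    (Finset.le_sup' (fun x => ((Kε x).1 : ℝ)) hsne.choose_spec)
  obtain ⟨B, hB⟩ := isCompact_Icc.exists_bound_of_continuousOn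
    (hf.continuous.continuousOn (s := Icc (-R) R))
  have hBnn : 0 ≤ B := le_trans (norm_nonneg _) (hB 0 h0mem)
  refine ⟨max K (2 * B / δ), le_trans hKnn (le_max_left _ _), ?_⟩
  intro a ha b hb
  rcases lt_or_ge (dist a b) δ with hd | hd
  · rcases mem_iUnion₂.mp (hs ha) with ⟨x, hxs, hax⟩
    have hδle : δ ≤ (Kε x).2 / 2 := Finset.inf'_le _ hxs
    rw [Metric.mem_ball] at hax
    have hbx : b ∈ Metric.ball x (Kε x).2 := by
      rw [Metric.mem_ball]
      calc dist b x ≤ dist b a + dist a x := dist_triangle _ _ _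
        _ < δ + (Kε x).2 / 2 := by rw [dist_comm b a]; exact add_lt_add hd hax
        _ ≤ (Kε x).2 := by linarith
    have hax' : a ∈ Metric.ball x (Kε x).2 :=
      Metric.mem_ball.mpr (lt_of_lt_of_le hax (by linarith [hεpos x]))
    have hlipd := (hlip x).dist_le_mul a hax' b hbx
    rw [Real.dist_eq, Real.dist_eq] at hlipd
    calc |f a - f b| ≤ ((Kε x).1 : ℝ) * |a - b| := hlipd
      _ ≤ max K (2 * B / δ) * |a - b| := by
          apply mul_le_mul_of_nonneg_right _ (abs_nonneg _)
          exact le_trans (Finset.le_sup' (fun x => ((Kε x).1 : ℝ)) hxs) (le_max_left _ _)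
  · have h1 : |f a - f b| ≤ 2 * B := by
      calc |f a - f b| ≤ |f a| + |f b| := abs_sub _ _
        _ ≤ B + B := add_le_add (hB a ha) (hB b hb)
        _ = 2 * B := by ring
    have h2 : (2 * B / δ) * δ ≤ (2 * B / δ) * |a - b| := by
      apply mul_le_mul_of_nonneg_left _ (by positivity)
      rwa [← Real.dist_eq]
    calc |f a - f b| ≤ 2 * B := h1
      _ = (2 * B / δ) * δ := by field_simp
      _ ≤ (2 * B / δ) * |a - b| := h2
      _ ≤ max K (2 * B / δ) * |a - b| := mul_le_mul_of_nonneg_right (le_max_right _ _) (abs_nonneg _)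

section pLap
variable {V : Type*} (ω : V → V → ℝ) (hnonneg : ∀ x y, 0 ≤ ω x y)
  (hlf : ∀ x, (Function.support (ω x)).Finite)

lemma graphMu_eq_sum (x : V) : graphMu ω x = ∑ y ∈ (hlf x).toFinset, ω x y :=
  tsum_eq_sum fun y hy =>
    Function.notMem_support.mp (fun h => hy ((hlf x).mem_toFinset.mpr h))

lemma pLap_eq_sum (p : ℝ) (a : V → ℝ) (x : V) :
    pLap ω p a x = (∑ y ∈ (hlf x).toFinset, ω x y)⁻¹ *
      ∑ y ∈ (hlf x).toFinset, ω x y * |a y - a x| ^ (p - 2) * (a y - a x) := by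
  rw [pLap, graphMu_eq_sum ω hlf]
  congr 1
  exact tsum_eq_sum fun y hy => by
    rw [Function.notMem_support.mp (fun h => hy ((hlf x).mem_toFinset.mpr h))]; ring

include hnonneg hlf in
lemma pLap_diff (p : ℝ) (hp : 2 < p) {R d : ℝ} (hR : 0 ≤ R) (hd : 0 ≤ d)
    (a b : V → ℝ) (haR : ∀ y, |a y| ≤ R) (hbR : ∀ y, |b y| ≤ R)
    (hab : ∀ y, |a y - b y| ≤ d) (x : V) :
    |pLap ω p a x - pLap ω p b x| ≤ ((p - 1) * (2 * R) ^ (p - 2)) * (2 * d) := by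
  set s := (hlf x).toFinset with hsdef
  set μ := ∑ y ∈ s, ω x y with hμdef
  have hμnn : 0 ≤ μ := Finset.sum_nonneg fun y _ => hnonneg x y
  have hKnn : 0 ≤ (p - 1) * (2 * R) ^ (p - 2) :=
    mul_nonneg (by linarith) (Real.rpow_nonneg (by linarith) _)
  have key : ∀ y, |(ω x y * |a y - a x| ^ (p - 2) * (a y - a x))
      - ω x y * |b y - b x| ^ (p - 2) * (b y - b x)|
      ≤ ω x y * (((p - 1) * (2 * R) ^ (p - 2)) * (2 * d)) := by
    intro y
    have h1 : |(|a y - a x| ^ (p - 2) * (a y - a x)) - |b y - b x| ^ (p - 2) * (b y - b x)|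
        ≤ ((p - 1) * (2 * R) ^ (p - 2)) * |(a y - a x) - (b y - b x)| := by
      apply phi_lipschitz p hp (by linarith)
      · calc |a y - a x| ≤ |a y| + |a x| := abs_sub _ _
          _ ≤ 2 * R := by linarith [haR y, haR x]
      · calc |b y - b x| ≤ |b y| + |b x| := abs_sub _ _
          _ ≤ 2 * R := by linarith [hbR y, hbR x]
    have h2 : |(a y - a x) - (b y - b x)| ≤ 2 * d := by
      calc |(a y - a x) - (b y - b x)| = |(a y - b y) - (a x - b x)| := by ring_nf
        _ ≤ |a y - b y| + |a x - b x| := abs_sub _ _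
        _ ≤ 2 * d := by linarith [hab y, hab x]
    calc |(ω x y * |a y - a x| ^ (p - 2) * (a y - a x))
        - ω x y * |b y - b x| ^ (p - 2) * (b y - b x)|
        = ω x y * |(|a y - a x| ^ (p - 2) * (a y - a x)) - |b y - b x| ^ (p - 2) * (b y - b x)| := by
          rw [show (ω x y * |a y - a x| ^ (p - 2) * (a y - a x))
              - ω x y * |b y - b x| ^ (p - 2) * (b y - b x)
              = ω x y * ((|a y - a x| ^ (p - 2) * (a y - a x))
                - |b y - b x| ^ (p - 2) * (b y - b x)) from by ring,
            abs_mul, abs_of_nonneg (hnonneg x y)]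
      _ ≤ ω x y * (((p - 1) * (2 * R) ^ (p - 2)) * |(a y - a x) - (b y - b x)|) :=
          mul_le_mul_of_nonneg_left h1 (hnonneg x y)
      _ ≤ ω x y * (((p - 1) * (2 * R) ^ (p - 2)) * (2 * d)) := by
          apply mul_le_mul_of_nonneg_left _ (hnonneg x y)
          exact mul_le_mul_of_nonneg_left h2 hKnn
  rw [pLap_eq_sum ω hlf, pLap_eq_sum ω hlf, ← hsdef, ← hμdef, ← mul_sub, ← Finset.sum_sub_distrib]
  rw [abs_mul, abs_of_nonneg (inv_nonneg.mpr hμnn)]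
  have hsum : |∑ y ∈ s, ((ω x y * |a y - a x| ^ (p - 2) * (a y - a x))
      - ω x y * |b y - b x| ^ (p - 2) * (b y - b x))|
      ≤ μ * (((p - 1) * (2 * R) ^ (p - 2)) * (2 * d)) := by
    calc |∑ y ∈ s, ((ω x y * |a y - a x| ^ (p - 2) * (a y - a x))
        - ω x y * |b y - b x| ^ (p - 2) * (b y - b x))|
        ≤ ∑ y ∈ s, |(ω x y * |a y - a x| ^ (p - 2) * (a y - a x))
          - ω x y * |b y - b x| ^ (p - 2) * (b y - b x)| := Finset.abs_sum_le_sum_abs _ _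
      _ ≤ ∑ y ∈ s, ω x y * (((p - 1) * (2 * R) ^ (p - 2)) * (2 * d)) :=
          Finset.sum_le_sum fun y _ => key y
      _ = μ * (((p - 1) * (2 * R) ^ (p - 2)) * (2 * d)) := by rw [← Finset.sum_mul]
  calc μ⁻¹ * |∑ y ∈ s, ((ω x y * |a y - a x| ^ (p - 2) * (a y - a x))
      - ω x y * |b y - b x| ^ (p - 2) * (b y - b x))|
      ≤ μ⁻¹ * (μ * (((p - 1) * (2 * R) ^ (p - 2)) * (2 * d))) :=
        mul_le_mul_of_nonneg_left hsum (inv_nonneg.mpr hμnn)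
    _ ≤ ((p - 1) * (2 * R) ^ (p - 2)) * (2 * d) := by
        rcases eq_or_lt_of_le hμnn with h | h
        · rw [← h]; simp; positivity
        · rw [← mul_assoc, inv_mul_cancel₀ (ne_of_gt h), one_mul]

lemma pLap_const (p : ℝ) (c : ℝ) (x : V) : pLap ω p (fun _ => c) x = 0 := by
  simp [pLap]

include hnonneg hlf in
lemma pLap_bound (p : ℝ) (hp : 2 < p) {R : ℝ} (hR : 0 ≤ R)
    (a : V → ℝ) (haR : ∀ y, |a y| ≤ R) (x : V) :
    |pLap ω p a x| ≤ ((p - 1) * (2 * R) ^ (p - 2)) * (2 * (2 * R)) := by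
  have := pLap_diff ω hnonneg hlf p hp hR (d := 2 * R) (by linarith) a (fun _ => a x) haR
    (fun _ => haR x) (fun y => by
      calc |a y - a x| ≤ |a y| + |a x| := abs_sub _ _
        _ ≤ 2 * R := by linarith [haR y, haR x]) x
  rwa [pLap_const, sub_zero] at this

end pLap

/-- local-in-time existence for `u_t - Δ_p u = σ(x,t) f(u)`, `u(·,0) = u0`,
on a locally finite connected weighted graph, stated in integral form: there are `T > 0`
and a bounded function `u` on `V × [0,T]`, continuous in time at each vertex, with
`u(x,t) = u0(x) + ∫_0^t Δ_p u(x,s) ds + ∫_0^t σ(x,s) f(u(x,s)) ds`. -/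
theorem local_existence_on_graph
    {V : Type*} (ω : V → V → ℝ)
    (hsymm : ∀ x y, ω x y = ω y x)
    (hnonneg : ∀ x y, 0 ≤ ω x y)
    (hloop : ∀ x, ω x x = 0)
    (hlf : ∀ x, (Function.support (ω x)).Finite)
    (hconn : ∀ x y, Relation.ReflTransGen (fun a b => 0 < ω a b) x y)
    (p : ℝ) (hp : 2 < p)
    (σ : V → ℝ → ℝ)
    (hσpos : ∀ x t, 0 ≤ t → 0 < σ x t)
    (hσcont : ∀ x, ContinuousOn (σ x) (Set.Ici 0))
    (hσbd : ∀ T0 : ℝ, 0 < T0 → ∃ M, ∀ x, ∀ t ∈ Set.Icc (0 : ℝ) T0, σ x t ≤ M)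
    (f : ℝ → ℝ) (hf : LocallyLipschitz f) (hf0 : f 0 = 0)
    (u0 : V → ℝ) (hu0nn : ∀ x, 0 ≤ u0 x) (hu0bd : ∃ M, ∀ x, u0 x ≤ M) :
    ∃ T > (0 : ℝ), ∃ u : V → ℝ → ℝ,
      (∃ M, ∀ x, ∀ t ∈ Set.Icc (0 : ℝ) T, |u x t| ≤ M) ∧
      (∀ x, ContinuousOn (u x) (Set.Icc 0 T)) ∧
      (∀ x, ∀ t ∈ Set.Icc (0 : ℝ) T,
        u x t = u0 x + (∫ s in (0 : ℝ)..t, pLap ω p (fun y => u y s) x)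
          + ∫ s in (0 : ℝ)..t, σ x s * f (u x s)) := by
  classical
  rcases isEmpty_or_nonempty V with hV | hV
  · exact ⟨1, one_pos, fun _ _ => 0, ⟨0, fun x => isEmptyElim x⟩,
      fun x => isEmptyElim x, fun x => isEmptyElim x⟩
  -- setup constants
  obtain ⟨M0, hM0⟩ := hu0bd
  have hM0nn : 0 ≤ M0 := le_trans (hu0nn (Classical.arbitrary V)) (hM0 _)
  set R : ℝ := M0 + 1 with hRdef
  have hRpos : 0 < R := by linarith
  have hu0R : ∀ x, |u0 x| ≤ M0 := fun x => abs_le.mpr ⟨by linarith [hu0nn x], hM0 x⟩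
  obtain ⟨L, hLnn, hLf⟩ := locLip_bound hf hRpos
  have hfbd : ∀ a : ℝ, |a| ≤ R → |f a| ≤ L * R := by
    intro a ha
    have h0 : (0 : ℝ) ∈ Icc (-R) R := ⟨by linarith, hRpos.le⟩
    have := hLf a (abs_le.mp ha) 0 h0
    rw [hf0, sub_zero, sub_zero] at this
    exact le_trans this (mul_le_mul_of_nonneg_left ha hLnn)
  obtain ⟨M1, hM1⟩ := hσbd 1 one_pos
  have hM1nn : 0 ≤ M1 :=
    le_of_lt (lt_of_lt_of_le (hσpos (Classical.arbitrary V) 0 le_rfl)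
      (hM1 _ 0 ⟨le_rfl, zero_le_one⟩))
  set Kφ : ℝ := (p - 1) * (2 * R) ^ (p - 2) with hKφdef
  have hKφnn : 0 ≤ Kφ := mul_nonneg (by linarith) (Real.rpow_nonneg (by linarith) _)
  set C : ℝ := Kφ * (2 * (2 * R)) + M1 * (L * R) with hCdef
  have hCnn : 0 ≤ C := by positivity
  set Lip : ℝ := Kφ * 2 + M1 * L with hLipdef
  have hLipnn : 0 ≤ Lip := by positivity
  set T : ℝ := min 1 (min (1 / (C + 1)) (1 / (2 * Lip + 1))) with hTdef
  have hT0 : 0 < T := by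
    apply lt_min one_pos
    apply lt_min <;> positivity
  have hT1 : T ≤ 1 := min_le_left _ _
  have hTC : T * C ≤ 1 := by
    have h1 : T ≤ 1 / (C + 1) := le_trans (min_le_right _ _) (min_le_left _ _)
    have h2 : T * (C + 1) ≤ 1 := by
      rw [div_eq_inv_mul, mul_one] at h1
      calc T * (C + 1) ≤ (C + 1)⁻¹ * (C + 1) := mul_le_mul_of_nonneg_right h1 (by positivity)
        _ = 1 := inv_mul_cancel₀ (by positivity)
    nlinarith [hT0.le]
  have hTLip : T * Lip ≤ 1 / 2 := by
    have h1 : T ≤ 1 / (2 * Lip + 1) := le_trans (min_le_right _ _) (min_le_right _ _)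
    have h2 : T * (2 * Lip + 1) ≤ 1 := by
      rw [div_eq_inv_mul, mul_one] at h1
      calc T * (2 * Lip + 1) ≤ (2 * Lip + 1)⁻¹ * (2 * Lip + 1) :=
          mul_le_mul_of_nonneg_right h1 (by positivity)
        _ = 1 := inv_mul_cancel₀ (by positivity)
    nlinarith [hT0.le]
  -- topology on V
  letI : TopologicalSpace V := ⊥
  haveI : DiscreteTopology V := ⟨rfl⟩
  -- clamping
  set π : ℝ → ℝ := fun t => max 0 (min t T) with hπdef
  have hπc : Continuous π := continuous_const.max (continuous_id.min continuous_const)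
  have hπmem : ∀ t, π t ∈ Icc (0 : ℝ) T :=
    fun t => ⟨le_max_left _ _, max_le hT0.le (min_le_right _ _)⟩
  have hπid : ∀ t ∈ Icc (0 : ℝ) T, π t = t := by
    intro t ht
    simp only [hπdef]
    rw [min_eq_left ht.2, max_eq_right ht.1]
  -- ambient space
  set X := BoundedContinuousFunction (V × ℝ) ℝ with hXdef
  have hU0cont : Continuous (fun z : V × ℝ => u0 z.1) :=
    (continuous_of_discreteTopology (f := u0)).comp continuous_fst
  set U0 : X := BoundedContinuousFunction.ofNormedAddCommGroup _ hU0cont M0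
    (fun z => by simpa [Real.norm_eq_abs] using hu0R z.1) with hU0def
  have hU0coe : ∀ z : V × ℝ, U0 z = u0 z.1 := fun z => rfl
  -- integrand
  set G : X → V → ℝ → ℝ :=
    fun u x s => pLap ω p (fun y => u (y, s)) x + σ x s * f (u (x, s)) with hGdef
  -- continuity of path s ↦ u (y, s)
  have hpath : ∀ (u : X) (y : V), Continuous (fun s : ℝ => u (y, s)) :=
    fun u y => u.continuous.comp (Continuous.prodMk_right y)
  have hG1cont : ∀ (u : X) (x : V), Continuous (fun s : ℝ => pLap ω p (fun y => u (y, s)) x) := by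
    intro u x
    have hsum : Continuous (fun s : ℝ => (∑ y ∈ (hlf x).toFinset, ω x y)⁻¹ *
        ∑ y ∈ (hlf x).toFinset,
          ω x y * |u (y, s) - u (x, s)| ^ (p - 2) * (u (y, s) - u (x, s))) := by
      apply continuous_const.mul
      apply continuous_finset_sum
      intro y _
      have hΔ : Continuous (fun s : ℝ => u (y, s) - u (x, s)) :=
        (hpath u y).sub (hpath u x)
      exact (continuous_const.mul ((continuous_abs.comp hΔ).rpow_const
        (fun s => Or.inr (by linarith)))).mul hΔ
    exact hsum.congr (fun s => (pLap_eq_sum ω hlf p _ x).symm)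
  have hG2cont : ∀ (u : X) (x : V),
      ContinuousOn (fun s : ℝ => σ x s * f (u (x, s))) (Icc 0 T) :=
    fun u x => ((hσcont x).mono Icc_subset_Ici_self).mul
      ((hf.continuous.comp (hpath u x)).continuousOn)
  have hGcont : ∀ (u : X) (x : V), ContinuousOn (G u x) (Icc 0 T) :=
    fun u x => ((hG1cont u x).continuousOn).add (hG2cont u x)
  have hsubIcc : ∀ t1 t2 : ℝ, t1 ∈ Icc (0:ℝ) T → t2 ∈ Icc (0:ℝ) T →
      uIcc t1 t2 ⊆ Icc (0:ℝ) T := by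
    intro t1 t2 h1 h2
    exact Set.uIcc_subset_Icc h1 h2
  have hGint : ∀ (u : X) (x : V) (t1 t2 : ℝ), t1 ∈ Icc (0:ℝ) T → t2 ∈ Icc (0:ℝ) T →
      IntervalIntegrable (G u x) MeasureTheory.volume t1 t2 :=
    fun u x t1 t2 h1 h2 => ((hGcont u x).mono (hsubIcc t1 t2 h1 h2)).intervalIntegrable
  -- uniform bound for f on arbitrary balls
  have hfB : ∀ ρ : ℝ, ∃ B, 0 ≤ B ∧ ∀ a : ℝ, |a| ≤ ρ → |f a| ≤ B := by
    intro ρ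
    obtain ⟨B, hB⟩ := isCompact_Icc.exists_bound_of_continuousOn
      (hf.continuous.continuousOn (s := Icc (-ρ) ρ))
    exact ⟨max B 0, le_max_right _ _,
      fun a ha => le_trans (hB a (abs_le.mp ha)) (le_max_left _ _)⟩
  choose Bf hBfnn hBf using hfB
  -- generic bound for G
  have hGb : ∀ (u : X) (ρ B : ℝ), 0 ≤ ρ → (∀ z, |u z| ≤ ρ) → 0 ≤ B →
      (∀ a : ℝ, |a| ≤ ρ → |f a| ≤ B) → ∀ (x : V), ∀ s ∈ Icc (0:ℝ) T,
      |G u x s| ≤ ((p - 1) * (2 * ρ) ^ (p - 2)) * (2 * (2 * ρ)) + M1 * B := by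
    intro u ρ B hρ hu hBnn hB x s hs
    have h1 : |pLap ω p (fun y => u (y, s)) x| ≤ ((p - 1) * (2 * ρ) ^ (p - 2)) * (2 * (2 * ρ)) :=
      pLap_bound ω hnonneg hlf p hp hρ _ (fun y => hu (y, s)) x
    have hσs : 0 ≤ σ x s := (hσpos x s hs.1).le
    have h2 : |σ x s * f (u (x, s))| ≤ M1 * B := by
      rw [abs_mul, abs_of_nonneg hσs]
      exact mul_le_mul (hM1 x s ⟨hs.1, le_trans hs.2 hT1⟩) (hB _ (hu (x, s)))
        (abs_nonneg _) hM1nn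
    calc |G u x s| ≤ |pLap ω p (fun y => u (y, s)) x| + |σ x s * f (u (x, s))| := abs_add_le _ _
      _ ≤ ((p - 1) * (2 * ρ) ^ (p - 2)) * (2 * (2 * ρ)) + M1 * B := add_le_add h1 h2
  -- define Φ
  have hval : ∀ u : X, ∀ z, |u z| ≤ ‖u‖ := fun u z => by
    simpa [Real.norm_eq_abs] using u.norm_coe_le_norm z
  set Φfun : X → V × ℝ → ℝ :=
    fun u z => u0 z.1 + ∫ s in (0:ℝ)..(π z.2), G u z.1 s with hΦfundef
  have hΦcont : ∀ u : X, Continuous (Φfun u) := by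
    intro u
    rw [continuous_iff_continuousAt]
    intro z
    have hev : ∀ᶠ w : V × ℝ in nhds z, w.1 = z.1 := by
      have hopen : IsOpen {w : V × ℝ | w.1 = z.1} := by
        have : IsOpen ({z.1} : Set V) := isOpen_discrete _
        exact this.preimage continuous_fst
      exact hopen.mem_nhds rfl
    have hprim : ContinuousOn (fun r : ℝ => ∫ s in (0:ℝ)..r, G u z.1 s) (Icc 0 T) := by
      have := intervalIntegral.continuousOn_primitive_interval
        (a := (0:ℝ)) (b := T) (μ := MeasureTheory.volume) (f := G u z.1) ?_
      · rwa [uIcc_of_le hT0.le] at this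
      · rw [uIcc_of_le hT0.le]
        exact (hGcont u z.1).integrableOn_compact isCompact_Icc
    have hcont2 : Continuous fun t : ℝ => ∫ s in (0:ℝ)..(π t), G u z.1 s :=
      hprim.comp_continuous hπc hπmem
    have hca : Continuous fun w : V × ℝ => u0 z.1 + ∫ s in (0:ℝ)..(π w.2), G u z.1 s :=
      continuous_const.add (hcont2.comp continuous_snd)
    apply ContinuousAt.congr hca.continuousAt
    filter_upwards [hev] with w hw
    simp only [hΦfundef]
    rw [hw]
  have hΦbd : ∀ (u : X) (z : V × ℝ),
      ‖Φfun u z‖ ≤ M0 + (((p - 1) * (2 * ‖u‖) ^ (p - 2)) * (2 * (2 * ‖u‖)) + M1 * Bf ‖u‖) * T := by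
    intro u z
    set Cu : ℝ := ((p - 1) * (2 * ‖u‖) ^ (p - 2)) * (2 * (2 * ‖u‖)) + M1 * Bf ‖u‖ with hCu
    have hCunn : 0 ≤ Cu := by
      have : (0:ℝ) ≤ ((p - 1) * (2 * ‖u‖) ^ (p - 2)) * (2 * (2 * ‖u‖)) :=
        mul_nonneg (mul_nonneg (by linarith) (Real.rpow_nonneg (by positivity) _))
          (by positivity)
      have h2 := mul_nonneg hM1nn (hBfnn ‖u‖)
      linarith
    have hIbd : ‖∫ s in (0:ℝ)..(π z.2), G u z.1 s‖ ≤ Cu * T := by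
      have hb := intervalIntegral.norm_integral_le_of_norm_le_const
        (a := (0:ℝ)) (b := π z.2) (C := Cu) (f := G u z.1) ?_
      · calc ‖∫ s in (0:ℝ)..(π z.2), G u z.1 s‖ ≤ Cu * |π z.2 - 0| := hb
          _ ≤ Cu * T := by
            rw [sub_zero, abs_of_nonneg (hπmem z.2).1]
            exact mul_le_mul_of_nonneg_left (hπmem z.2).2 hCunn
      · intro s hs
        rw [uIoc_of_le (hπmem z.2).1] at hs
        have hsmem : s ∈ Icc (0:ℝ) T := ⟨hs.1.le, le_trans hs.2 (hπmem z.2).2⟩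
        rw [Real.norm_eq_abs]
        exact hGb u ‖u‖ (Bf ‖u‖) (norm_nonneg u) (hval u) (hBfnn _) (hBf _) z.1 s hsmem
    calc ‖Φfun u z‖ ≤ ‖u0 z.1‖ + ‖∫ s in (0:ℝ)..(π z.2), G u z.1 s‖ := norm_add_le _ _
      _ ≤ M0 + Cu * T := add_le_add (by simpa [Real.norm_eq_abs] using hu0R z.1) hIbd
  set Φ : X → X := fun u => BoundedContinuousFunction.ofNormedAddCommGroup
    (Φfun u) (hΦcont u) _ (hΦbd u) with hΦdef
  have hΦcoe : ∀ (u : X) (z : V × ℝ), Φ u z = Φfun u z := fun u z => rfl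
  -- the invariant set
  set S : Set X := Metric.closedBall U0 1 with hSdef
  have hmemS : ∀ u : X, u ∈ S → ∀ z, |u z| ≤ R := by
    intro u hu z
    have h1 : dist (u z) (U0 z) ≤ dist u U0 := BoundedContinuousFunction.dist_coe_le_dist z
    have h2 : dist u U0 ≤ 1 := Metric.mem_closedBall.mp hu
    have h3 : |u z - u0 z.1| ≤ 1 := by
      rw [← Real.dist_eq, ← hU0coe z]; exact le_trans h1 h2
    calc |u z| = |(u z - u0 z.1) + u0 z.1| := by ring_nf
      _ ≤ |u z - u0 z.1| + |u0 z.1| := abs_add_le _ _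
      _ ≤ 1 + M0 := add_le_add h3 (hu0R z.1)
      _ = R := by rw [hRdef]; ring
  have hmaps : ∀ u : X, u ∈ S → Φ u ∈ S := by
    intro u hu
    rw [hSdef, Metric.mem_closedBall]
    rw [BoundedContinuousFunction.dist_le zero_le_one]
    intro z
    rw [hΦcoe u z, hU0coe z, Real.dist_eq]
    have : Φfun u z - u0 z.1 = ∫ s in (0:ℝ)..(π z.2), G u z.1 s := by
      simp only [hΦfundef]; ring
    rw [this]
    have hb := intervalIntegral.norm_integral_le_of_norm_le_const
      (a := (0:ℝ)) (b := π z.2) (C := C) (f := G u z.1) ?_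
    · rw [Real.norm_eq_abs] at hb
      calc |∫ s in (0:ℝ)..(π z.2), G u z.1 s| ≤ C * |π z.2 - 0| := hb
        _ ≤ C * T := by
          rw [sub_zero, abs_of_nonneg (hπmem z.2).1]
          exact mul_le_mul_of_nonneg_left (hπmem z.2).2 hCnn
        _ = T * C := mul_comm _ _
        _ ≤ 1 := hTC
    · intro s hs
      rw [uIoc_of_le (hπmem z.2).1] at hs
      have hsmem : s ∈ Icc (0:ℝ) T := ⟨hs.1.le, le_trans hs.2 (hπmem z.2).2⟩
      rw [Real.norm_eq_abs]
      have := hGb u R (L * R) hRpos.le (hmemS u hu) (by positivity) hfbd z.1 s hsmem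
      simpa [hCdef, hKφdef] using this
  -- contraction estimate
  have hcontract : ∀ u w : X, u ∈ S → w ∈ S →
      dist (Φ u) (Φ w) ≤ (1/2 : ℝ) * dist u w := by
    intro u w hu hw
    set D : ℝ := dist u w with hDdef
    have hDnn : 0 ≤ D := dist_nonneg
    have hcoe : ∀ z, |u z - w z| ≤ D := by
      intro z
      rw [← Real.dist_eq]
      exact BoundedContinuousFunction.dist_coe_le_dist z
    have hGdiff : ∀ (x : V), ∀ s ∈ Icc (0:ℝ) T, |G u x s - G w x s| ≤ Lip * D := by
      intro x s hs
      have h1 : |pLap ω p (fun y => u (y, s)) x - pLap ω p (fun y => w (y, s)) x|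
          ≤ Kφ * (2 * D) :=
        pLap_diff ω hnonneg hlf p hp hRpos.le hDnn _ _
          (fun y => hmemS u hu (y, s)) (fun y => hmemS w hw (y, s))
          (fun y => hcoe (y, s)) x
      have hσs : 0 ≤ σ x s := (hσpos x s hs.1).le
      have h2 : |σ x s * f (u (x, s)) - σ x s * f (w (x, s))| ≤ M1 * (L * D) := by
        rw [← mul_sub, abs_mul, abs_of_nonneg hσs]
        have hfd : |f (u (x, s)) - f (w (x, s))| ≤ L * D := by
          have := hLf (u (x, s)) (abs_le.mp (hmemS u hu (x, s)))
            (w (x, s)) (abs_le.mp (hmemS w hw (x, s)))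
          exact le_trans this (mul_le_mul_of_nonneg_left (hcoe (x, s)) hLnn)
        exact mul_le_mul (hM1 x s ⟨hs.1, le_trans hs.2 hT1⟩) hfd (abs_nonneg _) hM1nn
      calc |G u x s - G w x s|
          = |(pLap ω p (fun y => u (y, s)) x - pLap ω p (fun y => w (y, s)) x)
            + (σ x s * f (u (x, s)) - σ x s * f (w (x, s)))| := by
            simp only [hGdef]; ring_nf
        _ ≤ |pLap ω p (fun y => u (y, s)) x - pLap ω p (fun y => w (y, s)) x|
            + |σ x s * f (u (x, s)) - σ x s * f (w (x, s))| := abs_add_le _ _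
        _ ≤ Kφ * (2 * D) + M1 * (L * D) := add_le_add h1 h2
        _ = Lip * D := by rw [hLipdef]; ring
    rw [BoundedContinuousFunction.dist_le (by positivity)]
    intro z
    rw [hΦcoe u z, hΦcoe w z, Real.dist_eq]
    have hdiff : Φfun u z - Φfun w z
        = ∫ s in (0:ℝ)..(π z.2), (G u z.1 s - G w z.1 s) := by
      simp only [hΦfundef]
      rw [intervalIntegral.integral_sub (hGint u z.1 0 (π z.2) ⟨le_rfl, hT0.le⟩ (hπmem z.2))
        (hGint w z.1 0 (π z.2) ⟨le_rfl, hT0.le⟩ (hπmem z.2))]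
      ring
    rw [hdiff]
    have hb := intervalIntegral.norm_integral_le_of_norm_le_const
      (a := (0:ℝ)) (b := π z.2) (C := Lip * D) (f := fun s => G u z.1 s - G w z.1 s) ?_
    · rw [Real.norm_eq_abs] at hb
      calc |∫ s in (0:ℝ)..(π z.2), (G u z.1 s - G w z.1 s)| ≤ (Lip * D) * |π z.2 - 0| := hb
        _ ≤ (Lip * D) * T := by
          rw [sub_zero, abs_of_nonneg (hπmem z.2).1]
          exact mul_le_mul_of_nonneg_left (hπmem z.2).2 (by positivity)
        _ = (T * Lip) * D := by ring
        _ ≤ (1/2 : ℝ) * D := mul_le_mul_of_nonneg_right hTLip hDnn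
    · intro s hs
      rw [uIoc_of_le (hπmem z.2).1] at hs
      have hsmem : s ∈ Icc (0:ℝ) T := ⟨hs.1.le, le_trans hs.2 (hπmem z.2).2⟩
      rw [Real.norm_eq_abs]
      exact hGdiff z.1 s hsmem
  -- fixed point
  haveI : CompleteSpace S := (Metric.isClosed_closedBall (x := U0) (ε := 1)).completeSpace_coe
  haveI : Nonempty S := ⟨⟨U0, Metric.mem_closedBall_self zero_le_one⟩⟩
  set Φ' : S → S := fun u => ⟨Φ u.1, hmaps u.1 u.2⟩ with hΦ'def
  have hc : ContractingWith (1/2 : NNReal) Φ' := by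
    constructor
    · exact NNReal.half_lt_self one_ne_zero
    · apply LipschitzWith.of_dist_le_mul
      intro u w
      have := hcontract u.1 w.1 u.2 w.2
      rw [Subtype.dist_eq, Subtype.dist_eq]
      simpa using this
  set fp : S := ContractingWith.fixedPoint Φ' hc with hfpdef
  have hfp : Φ' fp = fp := hc.fixedPoint_isFixedPt
  have hfp' : Φ (fp : X) = (fp : X) := congrArg Subtype.val hfp
  -- conclude
  refine ⟨T, hT0, fun x t => (fp : X) (x, t), ⟨R, ?_⟩, ?_, ?_⟩
  · intro x t _
    exact hmemS (fp : X) fp.2 (x, t)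
  · intro x
    exact ((fp : X).continuous.comp (Continuous.prodMk_right x)).continuousOn
  · intro x t ht
    have he : Φfun (fp : X) (x, t) = (fp : X) (x, t) := by
      rw [← hΦcoe (fp : X) (x, t), hfp']
    show (fp : X) (x, t) = u0 x + (∫ s in (0:ℝ)..t, pLap ω p (fun y => (fp : X) (y, s)) x)
      + ∫ s in (0:ℝ)..t, σ x s * f ((fp : X) (x, s))
    rw [← he]
    simp only [hΦfundef]
    rw [hπid t ht]
    have hsplit : ∫ s in (0:ℝ)..t, G (fp : X) x s
        = (∫ s in (0:ℝ)..t, pLap ω p (fun y => (fp : X) (y, s)) x)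
          + ∫ s in (0:ℝ)..t, σ x s * f ((fp : X) (x, s)) := by
      have hI1 : IntervalIntegrable (fun s => pLap ω p (fun y => (fp : X) (y, s)) x)
          MeasureTheory.volume 0 t :=
        ((hG1cont (fp : X) x).continuousOn).intervalIntegrable
      have hI2 : IntervalIntegrable (fun s => σ x s * f ((fp : X) (x, s)))
          MeasureTheory.volume 0 t :=
        ((hG2cont (fp : X) x).mono (hsubIcc 0 t ⟨le_rfl, hT0.le⟩ ht)).intervalIntegrable
      exact intervalIntegral.integral_add hI1 hI2
    rw [hsplit]
    ring
end

section
/- (Comparison principle) Let T∈(0,∞], p>2, and let U⊆V be finite. Let u,v:Ū×[0,T)→ℝ be such that u(x,·),v(x,·)∈C¹([0,T)) for every x∈U. Suppose u_t(x,t) − Δ_p|_U u(x,t) − σ(x,t)f(u(x,t)) ≥ v_t(x,t) − Δ_p|_U v(x,t) − σ(x,t)f(v(x,t)) for all (x,t)∈U×(0,T), u(x,t) ≥ v(x,t) for all (x,t)∈∂U×[0,T), and u(x,0) ≥ v(x,0) for all x∈U. Then u(x,t) ≥ v(x,t) for all (x,t)∈Ū×[0,T). -/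
open scoped ENNReal
open Classical Filter Set

/-- The (outer vertex) boundary of `U`: vertices outside `U` adjacent to some vertex of `U`. -/
def bdry {V : Type*} (ω : V → V → ℝ) (U : Set V) : Set V :=
  {x | x ∉ U ∧ ∃ y ∈ U, 0 < ω x y}

/-- `Ū = U ∪ ∂U`. -/
def vclosure {V : Type*} (ω : V → V → ℝ) (U : Set V) : Set V := U ∪ bdry ω U

/-- The time interval `[0,T)` for an extended-real time horizon `T ∈ (0,∞]`. -/
def ITv (T : ℝ≥0∞) : Set ℝ := {t : ℝ | 0 ≤ t ∧ ENNReal.ofReal t < T}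

open scoped Topology

/-- Monotonicity of `s ↦ |s|^(p-2) * s` for `p ≥ 2`. -/
lemma phi_mono {p : ℝ} (hp : 2 < p) : Monotone (fun s : ℝ => |s| ^ (p - 2) * s) := by
  have hkey : ∀ a b : ℝ, 0 ≤ a → a ≤ b → |a| ^ (p - 2) * a ≤ |b| ^ (p - 2) * b := by
    intro a b ha hab
    rw [abs_of_nonneg ha, abs_of_nonneg (ha.trans hab)]
    exact mul_le_mul (Real.rpow_le_rpow ha hab (by linarith)) hab ha
      (Real.rpow_nonneg (ha.trans hab) _)
  intro a b hab
  show |a| ^ (p - 2) * a ≤ |b| ^ (p - 2) * b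
  rcases le_or_gt 0 a with ha | ha
  · exact hkey a b ha hab
  rcases le_or_gt 0 b with hb | hb
  · have h1 : |a| ^ (p - 2) * a ≤ 0 :=
      mul_nonpos_of_nonneg_of_nonpos (Real.rpow_nonneg (abs_nonneg a) _) ha.le
    have h2 : (0:ℝ) ≤ |b| ^ (p - 2) * b :=
      mul_nonneg (Real.rpow_nonneg (abs_nonneg b) _) hb
    linarith
  · have := hkey (-b) (-a) (by linarith) (by linarith)
    rw [abs_neg, abs_neg] at this
    rw [abs_of_neg ha] at this ⊢
    rw [abs_of_neg hb] at this ⊢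
    nlinarith [this]

/-- Comparison of graph p-Laplacians. -/
lemma pLap_mono {V : Type*} (ω : V → V → ℝ) (hnonneg : ∀ x y, 0 ≤ ω x y)
    (hlf : ∀ x, (Function.support (ω x)).Finite)
    {p : ℝ} (hp : 2 < p) (F G : V → ℝ) (x : V)
    (h : ∀ y, ω x y ≠ 0 → F y - F x ≤ G y - G x) :
    pLap ω p F x ≤ pLap ω p G x := by
  have hterm : ∀ (H : V → ℝ) (y : V),
      ω x y * |H y - H x| ^ (p - 2) * (H y - H x)
        = ω x y * (|H y - H x| ^ (p - 2) * (H y - H x)) := by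
    intro H y; ring
  have hsupp : ∀ H : V → ℝ, (Function.support
      (fun y => ω x y * |H y - H x| ^ (p - 2) * (H y - H x))).Finite := by
    intro H
    apply (hlf x).subset
    intro y hy
    simp only [Function.mem_support] at hy ⊢
    intro h0
    apply hy
    rw [h0]; ring
  have hS : ∀ H : V → ℝ, Summable (fun y => ω x y * |H y - H x| ^ (p - 2) * (H y - H x)) :=
    fun H => summable_of_finite_support (hsupp H)
  have hle : (∑' y, ω x y * |F y - F x| ^ (p - 2) * (F y - F x))
      ≤ ∑' y, ω x y * |G y - G x| ^ (p - 2) * (G y - G x) := by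
    apply Summable.tsum_le_tsum _ (hS F) (hS G)
    intro y
    rcases eq_or_ne (ω x y) 0 with h0 | h0
    · simp [h0]
    · rw [hterm F y, hterm G y]
      exact mul_le_mul_of_nonneg_left (phi_mono hp (by linarith [h y h0])) (hnonneg x y)
  have hmu : 0 ≤ (graphMu ω x)⁻¹ :=
    inv_nonneg.2 (tsum_nonneg (fun y => hnonneg x y))
  exact mul_le_mul_of_nonneg_left hle hmu

/-- A locally Lipschitz function is Lipschitz (with a real constant) on a compact set. -/
lemma locallyLipschitz_lipschitzOn_compact {f : ℝ → ℝ} (hf : LocallyLipschitz f)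
    {s : Set ℝ} (hs : IsCompact s) :
    ∃ L : ℝ, 0 ≤ L ∧ ∀ a ∈ s, ∀ b ∈ s, |f a - f b| ≤ L * |a - b| := by
  rcases s.eq_empty_or_nonempty with rfl | hsne
  · exact ⟨0, le_rfl, by simp⟩
  have h1 : ∀ x : ℝ, ∃ εK : ℝ × NNReal, 0 < εK.1 ∧ LipschitzOnWith εK.2 f (Metric.ball x εK.1) := by
    intro x
    obtain ⟨K, t, ht, hK⟩ := hf x
    obtain ⟨ε, hε, hb⟩ := Metric.mem_nhds_iff.1 ht
    exact ⟨(ε, K), hε, hK.mono hb⟩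
  choose εK hε hK using h1
  have hcov : s ⊆ ⋃ x ∈ s, Metric.ball x ((εK x).1 / 2) := by
    intro x hx
    exact Set.mem_biUnion hx (Metric.mem_ball_self (by linarith [hε x]))
  obtain ⟨t, hts, htfin, hcover⟩ := hs.elim_finite_subcover_image
    (fun x _ => Metric.isOpen_ball) hcov
  have htne : t.Nonempty := by
    obtain ⟨a, ha⟩ := hsne
    obtain ⟨x, hx, -⟩ := Set.mem_iUnion₂.1 (hcover ha)
    exact ⟨x, hx⟩
  set ft := htfin.toFinset with hft
  have hftne : ft.Nonempty := by
    obtain ⟨x, hx⟩ := htne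
    exact ⟨x, htfin.mem_toFinset.2 hx⟩
  set δ := ft.inf' hftne (fun x => (εK x).1 / 2) with hδdef
  have hδ : 0 < δ := by
    rw [hδdef, Finset.lt_inf'_iff]
    intro i _
    linarith [hε i]
  set Kmax := ft.sup' hftne (fun x => ((εK x).2 : ℝ)) with hKmax
  have hKmax0 : 0 ≤ Kmax := by
    obtain ⟨x, hx⟩ := hftne
    exact le_trans ((εK x).2.coe_nonneg) (Finset.le_sup' (fun x => ((εK x).2 : ℝ)) hx)
  obtain ⟨B, hB⟩ := hs.exists_bound_of_continuousOn hf.continuous.continuousOn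
  set B' := max B 0 with hB'
  refine ⟨max Kmax (2 * B' / δ), le_trans hKmax0 (le_max_left _ _), ?_⟩
  intro a ha b hb
  rcases lt_or_ge (dist a b) δ with hd | hd
  · obtain ⟨x, hx, hax⟩ := Set.mem_iUnion₂.1 (hcover ha)
    have hxf : x ∈ ft := htfin.mem_toFinset.2 hx
    have hδx : δ ≤ (εK x).1 / 2 := Finset.inf'_le _ hxf
    have hax' : a ∈ Metric.ball x (εK x).1 := by
      rw [Metric.mem_ball] at hax ⊢
      linarith [hε x]
    have hbx : b ∈ Metric.ball x (εK x).1 := by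
      rw [Metric.mem_ball] at hax ⊢
      calc dist b x ≤ dist b a + dist a x := dist_triangle _ _ _
        _ < δ + (εK x).1 / 2 := by rw [dist_comm b a]; linarith
        _ ≤ (εK x).1 := by linarith
    have := (hK x).dist_le_mul a hax' b hbx
    rw [Real.dist_eq, Real.dist_eq] at this
    calc |f a - f b| ≤ ((εK x).2 : ℝ) * |a - b| := this
      _ ≤ max Kmax (2 * B' / δ) * |a - b| := by
          apply mul_le_mul_of_nonneg_right _ (abs_nonneg _)
          exact le_trans (Finset.le_sup' (fun x => ((εK x).2 : ℝ)) hxf) (le_max_left _ _)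
  · have hfa : |f a| ≤ B' := le_trans (by simpa using hB a ha) (le_max_left _ _)
    have hfb : |f b| ≤ B' := le_trans (by simpa using hB b hb) (le_max_left _ _)
    have hab : δ ≤ |a - b| := by rwa [Real.dist_eq] at hd
    calc |f a - f b| ≤ |f a| + |f b| := abs_sub _ _
      _ ≤ 2 * B' := by linarith
      _ = (2 * B' / δ) * δ := by field_simp
      _ ≤ (2 * B' / δ) * |a - b| := by
          apply mul_le_mul_of_nonneg_left hab
          positivity
      _ ≤ max Kmax (2 * B' / δ) * |a - b| :=
          mul_le_mul_of_nonneg_right (le_max_right _ _) (abs_nonneg _)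

/-- comparison principle: let `T ∈ (0,∞]`, `p > 2`, `U ⊆ V` finite, and let
`u, v` be `C¹`-in-time functions on `Ū × [0,T)` with
`u_t - Δ_p|_U u - σ f(u) ≥ v_t - Δ_p|_U v - σ f(v)` in `U × (0,T)`, `u ≥ v` on
`∂U × [0,T)`, and `u(·,0) ≥ v(·,0)` on `U`. Then `u ≥ v` on `Ū × [0,T)`. -/
theorem comparison_principle
    {V : Type*} (ω : V → V → ℝ)
    (hsymm : ∀ x y, ω x y = ω y x)
    (hnonneg : ∀ x y, 0 ≤ ω x y)
    (hloop : ∀ x, ω x x = 0)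
    (hlf : ∀ x, (Function.support (ω x)).Finite)
    (hconn : ∀ x y, Relation.ReflTransGen (fun a b => 0 < ω a b) x y)
    (p : ℝ) (hp : 2 < p)
    (U : Set V) (hUfin : U.Finite)
    (T : ℝ≥0∞) (hT : 0 < T)
    (σ : V → ℝ → ℝ)
    (hσpos : ∀ x t, 0 ≤ t → 0 < σ x t)
    (hσcont : ∀ x, ContinuousOn (σ x) (Set.Ici 0))
    (hσbd : ∀ T' : ℝ, 0 ≤ T' → ENNReal.ofReal T' < T →
      ∃ M, ∀ x ∈ vclosure ω U, ∀ t ∈ Set.Icc (0 : ℝ) T', σ x t ≤ M)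
    (f : ℝ → ℝ) (hf : LocallyLipschitz f)
    (u v : V → ℝ → ℝ)
    (hu : ∀ x ∈ U, ContDiffOn ℝ 1 (u x) (ITv T))
    (hv : ∀ x ∈ U, ContDiffOn ℝ 1 (v x) (ITv T))
    (hineq : ∀ x ∈ U, ∀ t ∈ ITv T, 0 < t →
      derivWithin (v x) (ITv T) t - pLap ω p (fun y => v y t) x - σ x t * f (v x t)
        ≤ derivWithin (u x) (ITv T) t - pLap ω p (fun y => u y t) x - σ x t * f (u x t))
    (hbdry : ∀ x ∈ bdry ω U, ∀ t ∈ ITv T, v x t ≤ u x t)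
    (hinit : ∀ x ∈ U, v x 0 ≤ u x 0) :
    ∀ x ∈ vclosure ω U, ∀ t ∈ ITv T, v x t ≤ u x t := by
  intro x hx t ht
  rcases hx with hxU | hxB
  swap
  · exact hbdry x hxB t ht
  rcases eq_or_lt_of_le ht.1 with rfl | h0t
  · exact hinit x hxU
  -- basic facts about the time interval
  have hsub : Icc (0:ℝ) t ⊆ ITv T := fun z hz =>
    ⟨hz.1, lt_of_le_of_lt (ENNReal.ofReal_le_ofReal hz.2) ht.2⟩
  have hUD : UniqueDiffOn ℝ (ITv T) := by
    rcases eq_or_ne T ⊤ with rfl | hTt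
    · have hIci : ITv ⊤ = Ici (0:ℝ) := by
        ext z; simp [ITv]
      rw [hIci]; exact uniqueDiffOn_Ici 0
    · have hIco : ITv T = Ico (0:ℝ) T.toReal := by
        ext z
        constructor
        · rintro ⟨h1, h2⟩
          exact ⟨h1, (ENNReal.ofReal_lt_iff_lt_toReal h1 hTt).1 h2⟩
        · rintro ⟨h1, h2⟩
          exact ⟨h1, (ENNReal.ofReal_lt_iff_lt_toReal h1 hTt).2 h2⟩
      rw [hIco]; exact uniqueDiffOn_Ico 0 _
  classical
  set s : Finset V := hUfin.toFinset with hsdef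
  have hmem : ∀ x' : V, x' ∈ s ↔ x' ∈ U := fun x' => hUfin.mem_toFinset
  have hxs : x ∈ s := (hmem x).2 hxU
  have hne : s.Nonempty := ⟨x, hxs⟩
  set g : V → ℝ → ℝ := fun x' z => max (v x' z - u x' z) 0 with hgdef
  have hwc : ∀ x' ∈ U, ContinuousOn (fun z => v x' z - u x' z) (ITv T) := fun x' hx' =>
    ((hv x' hx').continuousOn.sub (hu x' hx').continuousOn)
  have hgc : ∀ i ∈ s, ContinuousOn (g i) (Icc (0:ℝ) t) := fun i hi =>
    ((hwc i ((hmem i).1 hi)).mono hsub).sup continuousOn_const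
  have hwd : ∀ x' ∈ U, ∀ z ∈ ITv T, HasDerivWithinAt (fun z => v x' z - u x' z)
      (derivWithin (v x') (ITv T) z - derivWithin (u x') (ITv T) z) (ITv T) z := by
    intro x' hx' z hz
    exact (((hv x' hx').differentiableOn one_ne_zero z hz).hasDerivWithinAt).sub
      (((hu x' hx').differentiableOn one_ne_zero z hz).hasDerivWithinAt)
  -- uniform bound on the values of u and v
  have hbd : ∀ x' : V, ∃ B : ℝ, ∀ z ∈ Icc (0:ℝ) t, x' ∈ U → |u x' z| ≤ B ∧ |v x' z| ≤ B := by
    intro x'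
    by_cases hx' : x' ∈ U
    · obtain ⟨B1, hB1⟩ := isCompact_Icc.exists_bound_of_continuousOn
        ((hu x' hx').continuousOn.mono hsub)
      obtain ⟨B2, hB2⟩ := isCompact_Icc.exists_bound_of_continuousOn
        ((hv x' hx').continuousOn.mono hsub)
      exact ⟨max B1 B2, fun z hz _ => ⟨le_trans (by simpa using hB1 z hz) (le_max_left _ _),
        le_trans (by simpa using hB2 z hz) (le_max_right _ _)⟩⟩
    · exact ⟨0, fun z hz h => absurd h hx'⟩
  choose B hB using hbd
  set R := s.sup' hne B with hRdef
  have hRB : ∀ x' ∈ U, ∀ z ∈ Icc (0:ℝ) t,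
      u x' z ∈ Icc (-R) R ∧ v x' z ∈ Icc (-R) R := by
    intro x' hx' z hz
    have h1 := (hB x' z hz hx').1
    have h2 := (hB x' z hz hx').2
    have h3 : B x' ≤ R := Finset.le_sup' B ((hmem x').2 hx')
    rw [abs_le] at h1 h2
    exact ⟨⟨by linarith, by linarith⟩, ⟨by linarith, by linarith⟩⟩
  obtain ⟨L, hL0, hLip⟩ := locallyLipschitz_lipschitzOn_compact hf
    (isCompact_Icc (a := -R) (b := R))
  obtain ⟨M, hM⟩ := hσbd t ht.1 ht.2
  set C := max M 1 * L with hCdef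
  have hC0 : 0 ≤ C := mul_nonneg (le_trans zero_le_one (le_max_right _ _)) hL0
  -- the maximum function
  set m : ℝ → ℝ := fun z => s.sup' hne (fun x' => g x' z) with hmdef
  have hmc : ContinuousOn m (Icc (0:ℝ) t) :=
    ContinuousOn.finset_sup'_apply hne hgc
  have hm_nonneg : ∀ z, 0 ≤ m z := fun z =>
    le_trans (le_max_right _ _) (Finset.le_sup' (fun x' => g x' z) hxs)
  have hm0 : m 0 = 0 := by
    apply le_antisymm _ (hm_nonneg 0)
    apply Finset.sup'_le
    intro i hi
    exact max_le (sub_nonpos.2 (hinit i ((hmem i).1 hi))) le_rfl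
  -- the slope estimate
  have hslope : ∀ ε, 0 < ε → ∀ z ∈ Ico ε t, ∀ r, C * m z < r →
      ∃ᶠ ζ in 𝓝[>] z, (ζ - z)⁻¹ * (m ζ - m z) < r := by
    intro ε hε z hz r hr
    have hz0 : 0 < z := lt_of_lt_of_le hε hz.1
    have hzt : z < t := hz.2
    have hzI : z ∈ Icc (0:ℝ) t := ⟨hz0.le, hzt.le⟩
    have hzITv : z ∈ ITv T := hsub hzI
    have hr0 : 0 < r := lt_of_le_of_lt (mul_nonneg hC0 (hm_nonneg z)) hr
    apply Filter.Eventually.frequently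
    have hIoo : Ioo z t ∈ 𝓝[>] z := Ioo_mem_nhdsGT_of_mem ⟨le_rfl, hzt⟩
    have hIooIcc : Ioo z t ⊆ Icc (0:ℝ) t := fun ζ hζ => ⟨le_trans hz0.le hζ.1.le, hζ.2.le⟩
    have hmain : ∀ᶠ ζ in 𝓝[>] z, ∀ i ∈ s, g i ζ < m z + r * (ζ - z) := by
      rw [eventually_all_finset]
      intro i hi
      have hiU : i ∈ U := (hmem i).1 hi
      rcases lt_or_eq_of_le (Finset.le_sup' (fun x' => g x' z) hi) with hlt | heq
      · -- strictly below the max: use continuity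
        have htd : Tendsto (g i) (𝓝[>] z) (𝓝 (g i z)) := by
          apply (((hgc i hi).continuousWithinAt hzI).mono hIooIcc).tendsto.mono_left
          exact nhdsWithin_le_iff.2 hIoo
        filter_upwards [htd.eventually_lt_const hlt, hIoo] with ζ h1ζ hζ
        have : 0 < r * (ζ - z) := mul_pos hr0 (by linarith [hζ.1])
        linarith
      · rcases lt_or_ge (v i z - u i z) 0 with hwneg | hwpos
        · -- the max is 0 and w i z < 0: use continuity of w
          have htd : Tendsto (fun ζ => v i ζ - u i ζ) (𝓝[>] z) (𝓝 (v i z - u i z)) := by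
            apply ((((hwc i hiU).mono hsub).continuousWithinAt hzI).mono hIooIcc).tendsto.mono_left
            exact nhdsWithin_le_iff.2 hIoo
          filter_upwards [htd.eventually_lt_const hwneg, hIoo] with ζ hζ1 hζ2
          have hgζ : g i ζ = 0 := max_eq_right hζ1.le
          rw [hgζ]
          have h4 : 0 < r * (ζ - z) := mul_pos hr0 (by linarith [hζ2.1])
          linarith [hm_nonneg z]
        · -- w i z = m z ≥ 0: use the differential inequality
          have hgeq : v i z - u i z = m z := by
            rw [← max_eq_left hwpos]
            exact heq
          set d := derivWithin (v i) (ITv T) z - derivWithin (u i) (ITv T) z with hddef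
          have hdle : d ≤ C * m z := by
            have h1 := hineq i hiU z hzITv hz0
            have h2 : pLap ω p (fun y => v y z) i ≤ pLap ω p (fun y => u y z) i := by
              apply pLap_mono ω hnonneg hlf hp
              intro y hy
              have hwy : v y z - u y z ≤ v i z - u i z := by
                by_cases hyU : y ∈ U
                · have h5 : g y z ≤ m z := Finset.le_sup' (fun x' => g x' z) ((hmem y).2 hyU)
                  have h6 : v y z - u y z ≤ m z := le_trans (le_max_left _ _) h5
                  linarith [hgeq]
                · have hyB : y ∈ bdry ω U :=
                    ⟨hyU, ⟨i, hiU, by rw [hsymm y i]; exact lt_of_le_of_ne (hnonneg i y) (Ne.symm hy)⟩⟩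
                  have h7 := hbdry y hyB z hzITv
                  linarith
              linarith
            have hσnn : 0 ≤ σ i z := (hσpos i z hz0.le).le
            have huv := hRB i hiU z hzI
            have hfl : f (v i z) - f (u i z) ≤ L * (v i z - u i z) := by
              have h8 := hLip (v i z) huv.2 (u i z) huv.1
              have habs : |v i z - u i z| = v i z - u i z := abs_of_nonneg hwpos
              calc f (v i z) - f (u i z) ≤ |f (v i z) - f (u i z)| := le_abs_self _
                _ ≤ L * |v i z - u i z| := h8
                _ = L * (v i z - u i z) := by rw [habs]
            have hσle : σ i z ≤ max M 1 := le_trans (hM i (Or.inl hiU) z hzI) (le_max_left _ _)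
            have hterm : σ i z * (f (v i z) - f (u i z)) ≤ C * m z := by
              calc σ i z * (f (v i z) - f (u i z)) ≤ σ i z * (L * (v i z - u i z)) :=
                    mul_le_mul_of_nonneg_left hfl hσnn
                _ ≤ max M 1 * (L * (v i z - u i z)) :=
                    mul_le_mul_of_nonneg_right hσle (mul_nonneg hL0 hwpos)
                _ = C * (v i z - u i z) := by rw [hCdef]; ring
                _ = C * m z := by rw [hgeq]
            have hms : σ i z * (f (v i z) - f (u i z))
                = σ i z * f (v i z) - σ i z * f (u i z) := mul_sub _ _ _
            rw [hddef]
            linarith [h1, h2, hterm]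
          have hdr : d < r := lt_of_le_of_lt hdle hr
          have hder : HasDerivWithinAt (fun z => v i z - u i z) d (Ioo z t) z :=
            (hwd i hiU z hzITv).mono (Subset.trans hIooIcc hsub)
          have hslopet : Tendsto (slope (fun z => v i z - u i z) z) (𝓝[Ioo z t \ {z}] z) (𝓝 d) :=
            hasDerivWithinAt_iff_tendsto_slope.1 hder
          have hle2 : 𝓝[>] z ≤ 𝓝[Ioo z t \ {z}] z :=
            nhdsWithin_le_iff.2 (mem_of_superset hIoo (fun ζ hζ => ⟨hζ, by simp [hζ.1.ne']⟩))
          filter_upwards [(hslopet.mono_left hle2).eventually_lt_const hdr, hIoo] with ζ hζ1 hζ2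
          have hzζ : 0 < ζ - z := by linarith [hζ2.1]
          rw [slope_def_field, div_lt_iff₀ hzζ] at hζ1
          have hwζ : v i ζ - u i ζ < m z + r * (ζ - z) := by
            rw [← hgeq]; linarith
          apply max_lt hwζ
          exact add_pos_of_nonneg_of_pos (hm_nonneg z) (mul_pos hr0 hzζ)
    filter_upwards [hmain, hIoo] with ζ hζ1 hζ2
    have hmlt : m ζ < m z + r * (ζ - z) := by
      rw [hmdef]
      exact (Finset.sup'_lt_iff hne).2 hζ1
    have hzζ : 0 < ζ - z := by linarith [hζ2.1]
    rw [inv_mul_lt_iff₀ hzζ]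
    nlinarith
  -- Gronwall on [ε, t] and limit ε → 0
  have hkey : ∀ ε ∈ Ioc (0:ℝ) t, m t ≤ m ε * Real.exp (C * t) := by
    intro ε hε
    have hIccsub : Icc ε t ⊆ Icc (0:ℝ) t := Icc_subset_Icc hε.1.le le_rfl
    have hgr := le_gronwallBound_of_liminf_deriv_right_le (f := m) (f' := fun z => C * m z)
      (δ := m ε) (K := C) (ε := 0) (a := ε) (b := t)
      (hmc.mono hIccsub)
      (fun z hz r hr => hslope ε hε.1 z hz r hr)
      le_rfl
      (fun z hz => by simp)
    have h2 := hgr t ⟨hε.2, le_rfl⟩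
    rw [gronwallBound_ε0] at h2
    calc m t ≤ m ε * Real.exp (C * (t - ε)) := h2
      _ ≤ m ε * Real.exp (C * t) := by
        apply mul_le_mul_of_nonneg_left _ (hm_nonneg ε)
        apply Real.exp_le_exp.2
        nlinarith [hC0, hε.1]
  have htends : Tendsto (fun ε => m ε * Real.exp (C * t)) (𝓝[>] (0:ℝ)) (𝓝 0) := by
    have h1 : Tendsto m (𝓝[>] (0:ℝ)) (𝓝 (m 0)) := by
      apply (hmc 0 ⟨le_rfl, h0t.le⟩).tendsto.mono_left
      apply nhdsWithin_le_iff.2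
      exact mem_of_superset (Ioc_mem_nhdsGT_of_mem ⟨le_rfl, h0t⟩) Ioc_subset_Icc_self
    rw [hm0] at h1
    simpa using h1.mul_const (Real.exp (C * t))
  have hfin : m t ≤ 0 := by
    apply ge_of_tendsto htends
    filter_upwards [Ioc_mem_nhdsGT_of_mem ⟨le_rfl, h0t⟩] with ε hε
    exact hkey ε hε
  have hle3 : v x t - u x t ≤ m t :=
    le_trans (le_max_left _ _) (Finset.le_sup' (fun x' => g x' t) hxs)
  linarith
end

section
/- Let p>2 and U⊆V be finite and nonempty. Suppose δ>0 with σ(x,t) ≥ δ for all x∈U, t ≥ 0, and f(s) ≥ (1/δ)·s^{p−1} for all s ≥ 0. Let u:Ū×[0,T)→ℝ be a nonnegative solution (with u(x,·)∈C¹ for x∈U) of u_t = Δ_p|_U u + σ(x,t)f(u) in U×(0,T), u=0 on ∂U×[0,T). Then the function t ↦ max_{x∈U} u(x,t) is nondecreasing on [0,T). -/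
open scoped ENNReal
open Classical Filter Set

/-- if `σ ≥ δ > 0` on `U × [0,∞)` and `f(s) ≥ (1/δ) s^{p-1}` for `s ≥ 0`, then
for any nonnegative solution `u` of the Dirichlet problem `u_t = Δ_p|_U u + σ f(u)` in
`U × (0,T)` with `u = 0` on `∂U × [0,T)`, the function `t ↦ max_{x ∈ U} u(x,t)` is
nondecreasing on `[0,T)`. -/
theorem max_of_solution_monotone
    {V : Type*} (ω : V → V → ℝ)
    (hsymm : ∀ x y, ω x y = ω y x)
    (hnonneg : ∀ x y, 0 ≤ ω x y)
    (hloop : ∀ x, ω x x = 0)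
    (hlf : ∀ x, (Function.support (ω x)).Finite)
    (hconn : ∀ x y, Relation.ReflTransGen (fun a b => 0 < ω a b) x y)
    (p : ℝ) (hp : 2 < p)
    (U : Set V) (hUfin : U.Finite) (hUne : U.Nonempty)
    (σ : V → ℝ → ℝ)
    (hσpos : ∀ x t, 0 ≤ t → 0 < σ x t)
    (hσcont : ∀ x, ContinuousOn (σ x) (Set.Ici 0))
    (δ : ℝ) (hδpos : 0 < δ) (hσδ : ∀ x ∈ U, ∀ t, 0 ≤ t → δ ≤ σ x t)
    (f : ℝ → ℝ) (hf : LocallyLipschitz f) (hf0 : f 0 = 0)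
    (hfgrow : ∀ s, 0 ≤ s → (1 / δ) * s ^ (p - 1) ≤ f s)
    (T : ℝ) (hT : 0 < T) (u : V → ℝ → ℝ)
    (hreg : ∀ x ∈ U, ContDiffOn ℝ 1 (u x) (Set.Ico 0 T))
    (hnn : ∀ x ∈ vclosure ω U, ∀ t ∈ Set.Ico (0 : ℝ) T, 0 ≤ u x t)
    (heq : ∀ x ∈ U, ∀ t ∈ Set.Ioo (0 : ℝ) T,
      derivWithin (u x) (Set.Ico 0 T) t = pLap ω p (fun y => u y t) x + σ x t * f (u x t))
    (hbdry : ∀ x ∈ bdry ω U, ∀ t ∈ Set.Ico (0 : ℝ) T, u x t = 0) :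
    MonotoneOn (fun t => ⨆ x : U, u x.1 t) (Set.Ico 0 T) := by
  classical
  set F : Finset V := hUfin.toFinset with hF
  have hmemF : ∀ x, x ∈ F ↔ x ∈ U := fun x => hUfin.mem_toFinset
  have hFne : F.Nonempty := by
    obtain ⟨x, hx⟩ := hUne; exact ⟨x, (hmemF x).2 hx⟩
  set M : ℝ → ℝ := fun t => F.sup' hFne (fun x => u x t) with hM
  have : Finite U := hUfin.to_subtype
  have : Nonempty U := hUne.to_subtype
  -- identify the iSup with the finite sup
  have hsup_eq : ∀ t, (⨆ x : U, u x.1 t) = M t := by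
    intro t
    apply le_antisymm
    · exact ciSup_le fun x => Finset.le_sup' (fun y => u y t) ((hmemF x.1).2 x.2)
    · obtain ⟨x₀, hx₀F, hx₀⟩ := Finset.exists_mem_eq_sup' hFne (fun x => u x t)
      calc M t = u x₀ t := hx₀
        _ ≤ ⨆ x : U, u x.1 t :=
          le_ciSup (f := fun x : U => u x.1 t) (Set.Finite.bddAbove (Set.finite_range _)) ⟨x₀, (hmemF x₀).1 hx₀F⟩
  have hvc : ∀ z, z ∈ U → z ∈ vclosure ω U := fun z hz => Or.inl hz
  -- continuity of M
  have hMcont : ContinuousOn M (Set.Ico 0 T) :=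
    ContinuousOn.finset_sup'_apply hFne fun x hx => (hreg x ((hmemF x).1 hx)).continuousOn
  -- key: right derivative of u x₀ is nonneg at any interior max point
  have hkey : ∀ t ∈ Set.Ioo (0:ℝ) T, ∀ x₀ ∈ U, (∀ y ∈ U, u y t ≤ u x₀ t) →
      0 ≤ derivWithin (u x₀) (Set.Ico 0 T) t := by
    intro t ht x₀ hx₀ hmax
    have htmem : t ∈ Set.Ico (0:ℝ) T := ⟨ht.1.le, ht.2⟩
    set m := u x₀ t with hm
    have hm0 : 0 ≤ m := hnn x₀ (hvc x₀ hx₀) t htmem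
    have hmp : 0 ≤ m ^ (p - 1) := Real.rpow_nonneg hm0 _
    -- reaction term bound
    have hfb : m ^ (p - 1) ≤ σ x₀ t * f m := by
      have hfm : (1 / δ) * m ^ (p - 1) ≤ f m := hfgrow m hm0
      have hfm0 : 0 ≤ f m := le_trans (by positivity) hfm
      calc m ^ (p - 1) = δ * ((1 / δ) * m ^ (p - 1)) := by field_simp
        _ ≤ δ * f m := mul_le_mul_of_nonneg_left hfm hδpos.le
        _ ≤ σ x₀ t * f m := mul_le_mul_of_nonneg_right (hσδ x₀ hx₀ t ht.1.le) hfm0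
    -- p-Laplacian bound
    have hpl : -(m ^ (p - 1)) ≤ pLap ω p (fun y => u y t) x₀ := by
      set s := (hlf x₀).toFinset with hs
      have hωs : ∀ y, y ∉ s → ω x₀ y = 0 := by
        intro y hy
        by_contra h
        exact hy ((hlf x₀).mem_toFinset.2 h)
      have hμ : graphMu ω x₀ = ∑ y ∈ s, ω x₀ y := tsum_eq_sum fun y hy => hωs y hy
      have hμnn : 0 ≤ graphMu ω x₀ := by
        rw [hμ]; exact Finset.sum_nonneg fun y _ => hnonneg x₀ y
      have hsum : (∑' y, ω x₀ y * |u y t - u x₀ t| ^ (p - 2) * (u y t - u x₀ t))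
          = ∑ y ∈ s, ω x₀ y * |u y t - u x₀ t| ^ (p - 2) * (u y t - u x₀ t) :=
        tsum_eq_sum fun y hy => by rw [hωs y hy]; ring
      have hplap_eq : pLap ω p (fun y => u y t) x₀
          = (graphMu ω x₀)⁻¹ * ∑ y ∈ s, ω x₀ y * |u y t - u x₀ t| ^ (p - 2) * (u y t - u x₀ t) := by
        simp only [pLap]
        rw [hsum]
      have hterm : ∀ y ∈ s, ω x₀ y * (-(m ^ (p - 1)))
          ≤ ω x₀ y * |u y t - u x₀ t| ^ (p - 2) * (u y t - u x₀ t) := by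
        intro y hy
        rcases (hnonneg x₀ y).eq_or_lt with h0 | hpos
        · rw [← h0]; simp
        · have hyU : y ∈ vclosure ω U := by
            by_cases hy' : y ∈ U
            · exact Or.inl hy'
            · exact Or.inr ⟨hy', ⟨x₀, hx₀, by rw [hsymm]; exact hpos⟩⟩
          have hy0 : 0 ≤ u y t := hnn y hyU t htmem
          have hyle : u y t ≤ m := by
            rcases hyU with h | h
            · exact hmax y h
            · rw [hbdry y h t htmem]; exact hm0
          set d := u y t - u x₀ t with hd
          have hd0 : d ≤ 0 := by rw [hd, ← hm]; linarith
          have habs : |d| ≤ m := by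
            rw [abs_of_nonpos hd0, hd, ← hm]; linarith
          have h1 : |d| ^ (p - 2) * d = -(|d| ^ (p - 1)) := by
            rw [abs_of_nonpos hd0]
            have he : (0:ℝ) ≤ -d := neg_nonneg.2 hd0
            rcases he.eq_or_lt with hz | hz
            · have hdz : d = 0 := by linarith
              rw [hdz, neg_zero, Real.zero_rpow (by linarith : (0:ℝ) < p - 2).ne',
                Real.zero_rpow (by linarith : (0:ℝ) < p - 1).ne']
              ring
            · have h2 : (-d) ^ (p - 2 + 1) = (-d) ^ (p - 2) * (-d) := Real.rpow_add_one hz.ne' _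
              have h3 : p - 2 + 1 = p - 1 := by ring
              rw [h3] at h2
              linear_combination h2
          have hkey2 : -(m ^ (p - 1)) ≤ |d| ^ (p - 2) * d := by
            rw [h1]
            have : |d| ^ (p - 1) ≤ m ^ (p - 1) :=
              Real.rpow_le_rpow (abs_nonneg d) habs (by linarith)
            linarith
          calc ω x₀ y * (-(m ^ (p - 1))) ≤ ω x₀ y * (|d| ^ (p - 2) * d) :=
                mul_le_mul_of_nonneg_left hkey2 hpos.le
            _ = ω x₀ y * |d| ^ (p - 2) * d := by ring
      have hsum_ge : -(m ^ (p - 1)) * graphMu ω x₀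
          ≤ ∑ y ∈ s, ω x₀ y * |u y t - u x₀ t| ^ (p - 2) * (u y t - u x₀ t) := by
        rw [hμ, Finset.mul_sum]
        refine Finset.sum_le_sum fun y hy => ?_
        calc -(m ^ (p - 1)) * ω x₀ y = ω x₀ y * (-(m ^ (p - 1))) := by ring
          _ ≤ _ := hterm y hy
      rcases hμnn.eq_or_lt with hμ0 | hμpos
      · rw [hplap_eq, ← hμ0]
        simp only [inv_zero, zero_mul]
        linarith
      · have hle := mul_le_mul_of_nonneg_left hsum_ge (inv_nonneg.2 hμnn)
        calc -(m ^ (p - 1))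
            = (graphMu ω x₀)⁻¹ * (-(m ^ (p - 1)) * graphMu ω x₀) := by
              field_simp
          _ ≤ (graphMu ω x₀)⁻¹
              * ∑ y ∈ s, ω x₀ y * |u y t - u x₀ t| ^ (p - 2) * (u y t - u x₀ t) := hle
          _ = pLap ω p (fun y => u y t) x₀ := hplap_eq.symm
    have heq' := heq x₀ hx₀ t ht
    rw [heq']
    linarith
  -- monotonicity on positive times via the fencing lemma
  have hstep : ∀ a b : ℝ, 0 < a → a ≤ b → b < T → M a ≤ M b := by
    intro a b ha hab hbT
    have hIcc : Set.Icc a b ⊆ Set.Ico 0 T := fun z hz =>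
      ⟨le_trans ha.le hz.1, lt_of_le_of_lt hz.2 hbT⟩
    have hcont : ContinuousOn (fun t => -M t) (Set.Icc a b) := (hMcont.mono hIcc).neg
    have hbound : ∀ x ∈ Set.Ico a b, ∀ r, (fun _ : ℝ => (0:ℝ)) x < r →
        ∃ᶠ z in nhdsWithin x (Set.Ioi x), slope (fun t => -M t) x z < r := by
      intro x hx r hr
      have hr' : (0:ℝ) < r := hr
      obtain ⟨x₀, hx₀F, hx₀⟩ := Finset.exists_mem_eq_sup' hFne (fun y => u y x)
      have hx₀U : x₀ ∈ U := (hmemF x₀).1 hx₀F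
      have hxIoo : x ∈ Set.Ioo (0:ℝ) T := ⟨lt_of_lt_of_le ha hx.1, hx.2.trans hbT⟩
      have hmax : ∀ y ∈ U, u y x ≤ u x₀ x := fun y hy => by
        rw [← hx₀]; exact Finset.le_sup' (fun y => u y x) ((hmemF y).2 hy)
      have hd : 0 ≤ derivWithin (u x₀) (Set.Ico 0 T) x := hkey x hxIoo x₀ hx₀U hmax
      have hdiff : DifferentiableWithinAt ℝ (u x₀) (Set.Ico 0 T) x :=
        ((hreg x₀ hx₀U).differentiableOn one_ne_zero) x ⟨hxIoo.1.le, hxIoo.2⟩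
      have hder := hdiff.hasDerivWithinAt
      have hslope : Filter.Tendsto (slope (u x₀) x) (nhdsWithin x (Set.Ioi x))
          (nhds (derivWithin (u x₀) (Set.Ico 0 T) x)) := by
        have h1 := hasDerivWithinAt_iff_tendsto_slope.1 hder
        rw [← nhdsWithin_Ioo_eq_nhdsGT hxIoo.2]
        refine h1.mono_left (nhdsWithin_mono x fun z hz => ?_)
        exact ⟨⟨le_of_lt (lt_trans hxIoo.1 hz.1), hz.2⟩, hz.1.ne'⟩
      have hev1 : ∀ᶠ z in nhdsWithin x (Set.Ioi x), -r < slope (u x₀) x z :=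
        hslope.eventually (eventually_gt_nhds (by linarith : -r < derivWithin (u x₀) (Set.Ico 0 T) x))
      have hev2 : ∀ᶠ z in nhdsWithin x (Set.Ioi x), z ∈ Set.Ioo x T :=
        Filter.eventually_of_mem (Ioo_mem_nhdsGT_of_mem ⟨le_rfl, hxIoo.2⟩) fun z hz => hz
      refine ((hev1.and hev2).mono ?_).frequently
      rintro z ⟨h1, h2⟩
      have hzx : 0 < z - x := sub_pos.2 h2.1
      have hMz : u x₀ z ≤ M z := Finset.le_sup' (fun y => u y z) hx₀F
      have hMx : M x = u x₀ x := hx₀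
      rw [slope_def_field] at h1 ⊢
      rw [div_lt_iff₀ hzx]
      rw [lt_div_iff₀ hzx] at h1
      nlinarith
    have hres := image_le_of_liminf_slope_right_le_deriv_boundary (f := fun t => -M t)
      (B := fun _ => -M a) (B' := fun _ => (0:ℝ)) hcont le_rfl continuousOn_const
      (fun x _ => hasDerivWithinAt_const x _ _) hbound (Set.right_mem_Icc.2 hab)
    simpa using hres
  -- conclude
  intro a ha b hb hab
  simp only [hsup_eq]
  rcases hab.eq_or_lt with rfl | hlt
  · exact le_rfl
  rcases ha.1.eq_or_lt with h0 | hapos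
  · have ha0 : a = 0 := h0.symm
    subst ha0
    have hbpos : 0 < b := hlt
    have hc : ContinuousWithinAt M (Set.Ico 0 T) 0 := hMcont 0 ⟨le_rfl, hT⟩
    have htend : Filter.Tendsto M (nhdsWithin 0 (Set.Ioo 0 b)) (nhds (M 0)) :=
      hc.mono_left (nhdsWithin_mono _ fun z hz => ⟨hz.1.le, lt_trans hz.2 hb.2⟩)
    have hnb : (nhdsWithin (0:ℝ) (Set.Ioo 0 b)).NeBot := by
      rw [nhdsWithin_Ioo_eq_nhdsGT hbpos]; infer_instance
    refine le_of_tendsto htend ?_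
    filter_upwards [eventually_mem_nhdsWithin] with z hz
    exact hstep z b hz.1 hz.2.le hb.2
  · exact hstep a b hapos hab hb.2
end

section
/- Let p>2 and suppose u0(x0)>0 for some vertex x0∈V and δ:=inf_{t≥0}σ(x0,t)>0. If for some fixed ε>0 one has f(s) ≥ (1/δ + ε)·s^{p−1} for all s ≥ 0, then the equation u_t(x,t) − Δ_p u(x,t) = σ(x,t)f(u(x,t)) on V×(0,∞), u(x,0)=u0(x), admits no nonnegative solution u defined for all t ≥ 0 with u(x,·) continuously differentiable on [0,∞) for every x∈V; every nonnegative solution of the equation blows up in finite time. -/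
open scoped ENNReal
open Classical Filter Set

-- key pointwise inequality
lemma key_ineq {p b a : ℝ} (hp : 2 < p) (hb : 0 ≤ b) (ha : -b ≤ a) :
    -(b ^ (p - 1)) ≤ |a| ^ (p - 2) * a := by
  rcases le_or_gt 0 a with h | h
  · have : (0:ℝ) ≤ |a| ^ (p - 2) * a :=
      mul_nonneg (Real.rpow_nonneg (abs_nonneg a) _) h
    nlinarith [Real.rpow_nonneg hb (p - 1)]
  · have hna : 0 < -a := by linarith
    have habs : |a| = -a := abs_of_neg h
    have h1 : |a| ^ (p - 2) * a = -((-a) ^ (p - 1)) := by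
      rw [habs]
      have : (-a) ^ (p - 2) * (-a) = (-a) ^ (p - 1) := by
        rw [show p - 1 = (p-2) + 1 by ring, Real.rpow_add hna, Real.rpow_one]
      nlinarith [this]
    rw [h1, neg_le_neg_iff]
    exact Real.rpow_le_rpow hna.le (by linarith) (by linarith)

lemma pLap_lower_bound {V : Type*} (ω : V → V → ℝ) (hnonneg : ∀ x y, 0 ≤ ω x y)
    (hlf : ∀ x, (Function.support (ω x)).Finite)
    (p : ℝ) (hp : 2 < p) (g : V → ℝ) (hg : ∀ y, 0 ≤ g y) (x : V) :
    -((g x) ^ (p - 1)) ≤ pLap ω p g x := by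
  classical
  set F := (hlf x).toFinset with hF
  have hsupp : ∀ y, y ∉ F → ω x y = 0 := by
    intro y hy
    by_contra hne
    exact hy ((hlf x).mem_toFinset.2 hne)
  have hmu : graphMu ω x = ∑ y ∈ F, ω x y := by
    rw [graphMu]; exact tsum_eq_sum hsupp
  have hmu0 : 0 ≤ graphMu ω x := by
    rw [hmu]; exact Finset.sum_nonneg fun y _ => hnonneg x y
  have hS : (∑' y, ω x y * |g y - g x| ^ (p - 2) * (g y - g x))
      = ∑ y ∈ F, ω x y * |g y - g x| ^ (p - 2) * (g y - g x) := by
    refine tsum_eq_sum fun y hy => ?_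
    rw [hsupp y hy]; ring
  have hterm : ∀ y ∈ F, ω x y * (-((g x) ^ (p - 1)))
      ≤ ω x y * |g y - g x| ^ (p - 2) * (g y - g x) := by
    intro y _
    have := key_ineq hp (hg x) (a := g y - g x) (by linarith [hg y])
    calc ω x y * (-((g x) ^ (p - 1))) ≤ ω x y * (|g y - g x| ^ (p - 2) * (g y - g x)) :=
          mul_le_mul_of_nonneg_left this (hnonneg x y)
      _ = ω x y * |g y - g x| ^ (p - 2) * (g y - g x) := by ring
  have hSge : -(graphMu ω x * (g x) ^ (p - 1))
      ≤ ∑' y, ω x y * |g y - g x| ^ (p - 2) * (g y - g x) := by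
    rw [hS, hmu]
    calc -((∑ y ∈ F, ω x y) * (g x) ^ (p - 1))
        = ∑ y ∈ F, ω x y * (-((g x) ^ (p - 1))) := by
          rw [← Finset.sum_mul]; ring
      _ ≤ _ := Finset.sum_le_sum hterm
  rw [pLap]
  rcases eq_or_lt_of_le hmu0 with hzero | hpos
  · have : ∀ y ∈ F, ω x y = 0 := by
      intro y hy
      have h1 : ∑ y ∈ F, ω x y = 0 := by rw [← hmu, ← hzero]
      exact (Finset.sum_eq_zero_iff_of_nonneg (fun y _ => hnonneg x y)).1 h1 y hy
    have hS0 : (∑' y, ω x y * |g y - g x| ^ (p - 2) * (g y - g x)) = 0 := by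
      rw [hS]
      refine Finset.sum_eq_zero fun y hy => ?_
      rw [this y hy]; ring
    rw [hS0, mul_zero]
    simpa using Real.rpow_nonneg (hg x) (p - 1)
  · have hinv : 0 ≤ (graphMu ω x)⁻¹ := inv_nonneg.2 hmu0
    calc -((g x) ^ (p - 1)) = (graphMu ω x)⁻¹ * (-(graphMu ω x * (g x) ^ (p - 1))) := by
          field_simp
      _ ≤ _ := mul_le_mul_of_nonneg_left hSge hinv

/-- same hypotheses as Statement 0, but for the parabolic *equation*
`u_t - Δ_p u = σ(x,t) f(u)`, `u(·,0) = u0`: it admits no nonnegative solution defined for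
all `t ≥ 0` that is `C¹` in time at each vertex. -/
theorem no_global_solution_equation_superlinear
    {V : Type*} (ω : V → V → ℝ)
    (hsymm : ∀ x y, ω x y = ω y x)
    (hnonneg : ∀ x y, 0 ≤ ω x y)
    (hloop : ∀ x, ω x x = 0)
    (hlf : ∀ x, (Function.support (ω x)).Finite)
    (hconn : ∀ x y, Relation.ReflTransGen (fun a b => 0 < ω a b) x y)
    (p : ℝ) (hp : 2 < p)
    (σ : V → ℝ → ℝ)
    (hσpos : ∀ x t, 0 ≤ t → 0 < σ x t)
    (hσcont : ∀ x, ContinuousOn (σ x) (Set.Ici 0))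
    (f : ℝ → ℝ) (hf : LocallyLipschitz f) (hf0 : f 0 = 0)
    (u0 : V → ℝ) (hu0nn : ∀ x, 0 ≤ u0 x) (hu0bd : ∃ M, ∀ x, u0 x ≤ M)
    (x0 : V) (hx0 : 0 < u0 x0)
    (δ : ℝ) (hδdef : δ = ⨅ t : Set.Ici (0 : ℝ), σ x0 t.1) (hδpos : 0 < δ)
    (ε : ℝ) (hε : 0 < ε)
    (hfgrow : ∀ s, 0 ≤ s → (1 / δ + ε) * s ^ (p - 1) ≤ f s) :
    ¬ ∃ u : V → ℝ → ℝ,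
      (∀ x, ContDiffOn ℝ 1 (u x) (Set.Ici 0)) ∧
      (∀ x t, 0 ≤ t → 0 ≤ u x t) ∧
      (∀ x, u x 0 = u0 x) ∧
      (∀ x t, 0 < t →
        derivWithin (u x) (Set.Ici 0) t - pLap ω p (fun y => u y t) x
          = σ x t * f (u x t)) := by
  rintro ⟨u, hC1, hnn, hinit, heq⟩
  set h : ℝ → ℝ := u x0 with hh
  set K : ℝ := δ * ε with hKdef
  have hK : 0 < K := mul_pos hδpos hε
  have hc : 0 < h 0 := by rw [hh, hinit x0]; exact hx0
  have hcont : ContinuousOn h (Ici 0) := (hC1 x0).continuousOn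
  have hdiffAt : ∀ t : ℝ, 0 < t → DifferentiableAt ℝ h t := fun t ht =>
    ((hC1 x0).differentiableOn one_ne_zero).differentiableAt (Ici_mem_nhds ht)
  -- derivative lower bound
  have hderiv : ∀ t : ℝ, 0 < t → K * (h t) ^ (p - 1) ≤ deriv h t := by
    intro t ht
    have heq0 := heq x0 t ht
    have hdw : derivWithin (u x0) (Ici 0) t = deriv h t :=
      derivWithin_of_mem_nhds (Ici_mem_nhds ht)
    have hpl := pLap_lower_bound ω hnonneg hlf p hp (fun y => u y t)
      (fun y => hnn y t ht.le) x0
    have hσge : δ ≤ σ x0 t := by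
      rw [hδdef]
      refine ciInf_le ⟨0, ?_⟩ (⟨t, ht.le⟩ : Set.Ici (0:ℝ))
      rintro r ⟨⟨s, hs⟩, rfl⟩
      exact (hσpos x0 s hs).le
    have hfge : (1 / δ + ε) * (h t) ^ (p - 1) ≤ f (h t) := hfgrow _ (hnn x0 t ht.le)
    have hrp : (0:ℝ) ≤ (h t) ^ (p - 1) := Real.rpow_nonneg (hnn x0 t ht.le) _
    have hcoef : (0:ℝ) < 1 / δ + ε := by positivity
    have hfnn : 0 ≤ f (h t) := le_trans (by positivity) hfge
    have h1 : δ * ((1 / δ + ε) * (h t) ^ (p - 1)) ≤ σ x0 t * f (h t) := by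
      calc δ * ((1 / δ + ε) * (h t) ^ (p - 1)) ≤ δ * f (h t) :=
            mul_le_mul_of_nonneg_left hfge hδpos.le
        _ ≤ σ x0 t * f (h t) := mul_le_mul_of_nonneg_right hσge hfnn
    have h2 : δ * ((1 / δ + ε) * (h t) ^ (p - 1)) = (1 + K) * (h t) ^ (p - 1) := by
      have hδne : δ ≠ 0 := ne_of_gt hδpos
      have hco : δ * (1 / δ + ε) = 1 + K := by
        rw [hKdef]; field_simp
      rw [← mul_assoc, hco]
    have h3 : deriv h t = pLap ω p (fun y => u y t) x0 + σ x0 t * f (h t) := by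
      rw [← hdw]; linarith [heq0]
    have : (fun y => u y t) x0 = h t := rfl
    rw [h3]
    nlinarith [hpl]
  -- monotonicity
  have hmono : MonotoneOn h (Ici 0) := by
    refine monotoneOn_of_deriv_nonneg (convex_Ici 0) hcont
      (fun t ht => ?_) (fun t ht => ?_)
    · rw [interior_Ici] at ht
      exact (hdiffAt t ht).differentiableWithinAt
    · rw [interior_Ici] at ht
      have := hderiv t ht
      have hrp : (0:ℝ) ≤ (h t) ^ (p - 1) := Real.rpow_nonneg (hnn x0 t ht.le) _
      nlinarith
  have hhtpos : ∀ t : ℝ, 0 ≤ t → 0 < h t := fun t ht =>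
    lt_of_lt_of_le hc (hmono (self_mem_Ici) ht ht)
  -- the auxiliary function g
  set g : ℝ → ℝ := fun t => (h t) ^ (2 - p) + K * (p - 2) * t with hgdef
  have hgderiv : ∀ t : ℝ, 0 < t →
      HasDerivAt g (deriv h t * (2 - p) * (h t) ^ (1 - p) + K * (p - 2)) t := by
    intro t ht
    have hd := (hdiffAt t ht).hasDerivAt
    have h1 : HasDerivAt (fun s => (h s) ^ (2 - p))
        (deriv h t * (2 - p) * (h t) ^ (2 - p - 1)) t :=
      hd.rpow_const (Or.inl (ne_of_gt (hhtpos t ht.le)))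
    have h2 : HasDerivAt (fun s : ℝ => K * (p - 2) * s) (K * (p - 2)) t := by
      simpa using (hasDerivAt_id t).const_mul (K * (p - 2))
    have := h1.add h2
    exact this.congr_deriv (by ring_nf)
  have hgderiv_le : ∀ t : ℝ, 0 < t → deriv g t ≤ 0 := by
    intro t ht
    rw [(hgderiv t ht).deriv]
    have hpos := hhtpos t ht.le
    have hmul : (h t) ^ (p - 1) * (h t) ^ (1 - p) = 1 := by
      rw [← Real.rpow_add hpos]
      norm_num
    have hrp1 : (0:ℝ) < (h t) ^ (1 - p) := Real.rpow_pos_of_pos hpos _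
    have hd := hderiv t ht
    have h2p : (2 - p) ≤ 0 := by linarith
    have s1 : deriv h t * (2 - p) ≤ K * (h t) ^ (p - 1) * (2 - p) :=
      mul_le_mul_of_nonpos_right hd h2p
    have s2 : deriv h t * (2 - p) * (h t) ^ (1 - p)
        ≤ K * (h t) ^ (p - 1) * (2 - p) * (h t) ^ (1 - p) :=
      mul_le_mul_of_nonneg_right s1 hrp1.le
    have s3 : K * (h t) ^ (p - 1) * (2 - p) * (h t) ^ (1 - p) = K * (2 - p) := by
      linear_combination K * (2 - p) * hmul
    linarith
  have hanti : AntitoneOn g (Ici 0) := by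
    refine antitoneOn_of_deriv_nonpos (convex_Ici 0) ?_ (fun t ht => ?_) (fun t ht => ?_)
    · apply ContinuousOn.add
      · exact fun t ht =>
          ((hcont t ht).rpow_const (Or.inl (ne_of_gt (hhtpos t ht))))
      · exact (continuous_const.mul continuous_id).continuousOn
    · rw [interior_Ici] at ht
      exact (hgderiv t ht).differentiableAt.differentiableWithinAt
    · rw [interior_Ici] at ht
      exact hgderiv_le t ht
  -- contradiction
  set T : ℝ := ((h 0) ^ (2 - p) + 1) / (K * (p - 2)) with hTdef
  have hKp : 0 < K * (p - 2) := mul_pos hK (by linarith)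
  have hT : 0 < T := div_pos (by positivity) hKp
  have hgle : g T ≤ g 0 := hanti self_mem_Ici hT.le hT.le
  have hg0 : g 0 = (h 0) ^ (2 - p) := by simp [hgdef]
  have hgT : (h 0) ^ (2 - p) + 1 ≤ g T := by
    have h1 : K * (p - 2) * T = (h 0) ^ (2 - p) + 1 := by
      rw [hTdef]; field_simp; exact div_self (by linarith)
    have h2 : 0 < (h T) ^ (2 - p) := Real.rpow_pos_of_pos (hhtpos T hT.le) _
    rw [hgdef]; simp only
    linarith
  rw [hg0] at hgle
  linarith
end
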